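/- arXiv:1804.02548 — 4 statements merged into one kernel-verified Lean document; each statement's English description precedes it below -/
import Mathlib

section
/- Let g be an element of the lamplighter group ℤ₂ ≀ ℤ whose lit lamps at non-negative positions are 0 ≤ i₁ < i₂ < … < i_k, whose lit lamps at negative positions are −j_l < … < −j₂ < −j₁ < 0 (so j_l > … > j₁ > 0), and whose lamplighter points at position m (with the convention i_k = 0 if there are no lit lamps at non-negative positions and j_l = 0 if there are none at negative positions). Then the word length of g with respect to the generating set A = {a, t} is d_A(g) = k + l + min{2·i_k + j_l + |m + j_l|, 2·j_l + i_k + |m − i_k|}. -/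
namespace CAG

/-- The convolution `w₁ ⊗ w₂` of two words, over the padded alphabet
`(Σ ∪ {⋄})²`, modelled as `Option α × Option α` where `none` is the padding symbol `⋄`. -/
def conv {α : Type*} : List α → List α → List (Option α × Option α)
  | [], [] => []
  | a :: as, [] => (some a, none) :: conv as []
  | [], b :: bs => (none, some b) :: conv [] bs
  | a :: as, b :: bs => (some a, some b) :: conv as bs

/-- A binary relation on words is regular if the language of convolutions of its pairs
is a regular language. -/
def IsRegularRel {α : Type*} (R : Set (List α × List α)) : Prop :=
  Language.IsRegular {w | ∃ p ∈ R, w = conv p.1 p.2}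

variable {G : Type*} [Group G]

/-- The alphabet `S = A ∪ A⁻¹` associated to a generating set `A ⊆ G`. -/
def Alph (A : Set G) : Type _ := {x : G // x ∈ A ∪ A⁻¹}

/-- The canonical evaluation map `π : S* → G`. -/
def eval (A : Set G) (w : List (Alph A)) : G := (w.map Subtype.val).prod

/-- The word length `d_A(g)` of `g` with respect to the generating set `A`. -/
noncomputable def wordLength (A : Set G) (g : G) : ℕ :=
  sInf {n | ∃ w : List (Alph A), eval A w = g ∧ w.length = n}

/-- The distance `d_A(g₁, g₂)` in the Cayley graph of `G` with respect to `A`. -/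
noncomputable def cayleyDist (A : Set G) (g₁ g₂ : G) : ℕ := wordLength A (g₁⁻¹ * g₂)

/-- `ψ : L → G` is a Cayley automatic representation of `G` (w.r.t. the
generating set `A`): `L ⊆ S*` is regular, `ψ` is a bijection from `L` onto `G`, and for every
`a ∈ A` the relation `R_a = {(ψ⁻¹(g), ψ⁻¹(g·a)) : g ∈ G}` is regular. -/
def IsCayleyAutomaticRep (A : Set G) (L : Language (Alph A)) (ψ : List (Alph A) → G) : Prop :=
  Language.IsRegular L ∧ Set.BijOn ψ L Set.univ ∧
    ∀ a ∈ A, IsRegularRel {p : List (Alph A) × List (Alph A) |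
      p.1 ∈ L ∧ p.2 ∈ L ∧ ψ p.2 = ψ p.1 * a}

/-- `G` is Cayley automatic with respect to the generating set `A`. -/
def IsCayleyAutomatic (A : Set G) : Prop :=
  ∃ (L : Language (Alph A)) (ψ : List (Alph A) → G), IsCayleyAutomaticRep A L ψ

/-- `G` is automatic (in the sense of Thurston) with respect to the generating set `A`:
there is a regular language `L ⊆ S*` on which the canonical evaluation map `π` is a bijection
onto `G` and all the relations `R_a`, `a ∈ A`, are regular. -/
def IsAutomatic (A : Set G) : Prop :=
  ∃ L : Language (Alph A), IsCayleyAutomaticRep A L (eval A)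

/-- The family `𝔉` of non-decreasing, non-negative real valued functions defined on a
final segment `[Q, ∞)` of `ℕ` (values below `Q` are irrelevant junk values). -/
structure FFun where
  Q : ℕ
  toFun : ℕ → ℝ
  nonneg : ∀ n, Q ≤ n → 0 ≤ toFun n
  mono : ∀ m n, Q ≤ m → m ≤ n → toFun m ≤ toFun n

/-- `h ⪯ f` : there are positive integers `K, M, N`, with `[N,∞)` contained in the domains of
`h` and `f`, such that `h(n) ≤ K·f(M·n)` for all `n ≥ N`. -/
def FFun.Preceq (h f : FFun) : Prop :=
  ∃ K M N : ℕ, 0 < K ∧ 0 < M ∧ 0 < N ∧ h.Q ≤ N ∧ f.Q ≤ N ∧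
    ∀ n, N ≤ n → h.toFun n ≤ K * f.toFun (M * n)

/-- `h ≍ f` iff `h ⪯ f` and `f ⪯ h`. -/
def FFun.Equiv (h f : FFun) : Prop := h.Preceq f ∧ f.Preceq h

/-- `h ≺ f` iff `h ⪯ f` and not `h ≍ f`. -/
def FFun.Prec (h f : FFun) : Prop := h.Preceq f ∧ ¬ h.Equiv f

/-- `G ∈ ℬ_f` with respect to the generating set `A`: there is a Cayley automatic
representation `ψ : L → G` such that the function
`h(n) = max{d_A(π(w), ψ(w)) : w ∈ L, |w| ≤ n}` satisfies `h ⪯ f`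
(stated equivalently: for some positive `K, M, N` with `N ≥ Q_f`, every `w ∈ L` with `|w| ≤ n`
and `n ≥ N` satisfies `d_A(π(w), ψ(w)) ≤ K·f(M·n)`). -/
def InB (A : Set G) (f : FFun) : Prop :=
  ∃ (L : Language (Alph A)) (ψ : List (Alph A) → G),
    IsCayleyAutomaticRep A L ψ ∧
    ∃ K M N : ℕ, 0 < K ∧ 0 < M ∧ 0 < N ∧ f.Q ≤ N ∧
      ∀ n, N ≤ n → ∀ w ∈ L, w.length ≤ n →
        (cayleyDist A (eval A w) (ψ w) : ℝ) ≤ K * f.toFun (M * n)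

/-- The identity function `𝔦(n) = n` as an element of `𝔉`. -/
def identF : FFun where
  Q := 1
  toFun n := n
  nonneg n _ := by positivity
  mono m n _ h := by simpa using (Nat.cast_le (α := ℝ)).mpr h

/-- The exponential function `𝔢(n) = exp n` as an element of `𝔉`. -/
noncomputable def expF : FFun where
  Q := 1
  toFun n := Real.exp n
  nonneg n _ := (Real.exp_pos n).le
  mono m n _ h := Real.exp_le_exp.mpr (by exact_mod_cast h)

end CAG
namespace CAG

/-- Configurations of lamps: finitely supported functions `ℤ → ℤ₂`. -/
abbrev Lamps := ℤ →₀ ZMod 2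

/-- Shift of a lamp configuration by `m`. -/
noncomputable def lampShift (m : ℤ) (f : Lamps) : Lamps := Finsupp.mapDomain (· + m) f

lemma lampShift_zero (f : Lamps) : lampShift 0 f = f := by
  simp only [lampShift, add_zero]
  exact Finsupp.mapDomain_id

lemma lampShift_lampShift (m m' : ℤ) (f : Lamps) :
    lampShift m (lampShift m' f) = lampShift (m' + m) f := by
  rw [lampShift, lampShift, lampShift, ← Finsupp.mapDomain_comp]
  congr 1
  funext x
  simp [add_assoc]

lemma lampShift_add (m : ℤ) (f g : Lamps) :
    lampShift m (f + g) = lampShift m f + lampShift m g :=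
  Finsupp.mapDomain_add

/-- The lamplighter group `ℤ₂ ≀ ℤ = (⊕_{i ∈ ℤ} ℤ₂) ⋊ ℤ`: elements are pairs `(f, m)` of a
finitely supported lamp configuration `f : ℤ → ℤ₂` and the lamplighter position `m ∈ ℤ`,
with `ℤ` acting on the lamp configurations by shift. -/
def Lamplighter := Lamps × ℤ

noncomputable instance : Mul Lamplighter :=
  ⟨fun g h => (g.1 + lampShift g.2 h.1, g.2 + h.2)⟩

instance : One Lamplighter := ⟨((0 : Lamps), (0 : ℤ))⟩

noncomputable instance : Inv Lamplighter := ⟨fun g => (lampShift (-g.2) g.1, -g.2)⟩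

lemma Lamplighter.mul_def (g h : Lamplighter) :
    g * h = (g.1 + lampShift g.2 h.1, g.2 + h.2) := rfl

lemma Lamplighter.one_def : (1 : Lamplighter) = ((0 : Lamps), (0 : ℤ)) := rfl

lemma Lamplighter.inv_def (g : Lamplighter) : g⁻¹ = (lampShift (-g.2) g.1, -g.2) := rfl

noncomputable instance : Group Lamplighter where
  mul_assoc a b c := by
    rw [Lamplighter.mul_def, Lamplighter.mul_def, Lamplighter.mul_def, Lamplighter.mul_def]
    refine Prod.ext ?_ (add_assoc _ _ _)
    show (a.1 + lampShift a.2 b.1) + lampShift (a.2 + b.2) c.1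
        = a.1 + lampShift a.2 (b.1 + lampShift b.2 c.1)
    rw [lampShift_add, lampShift_lampShift, add_comm a.2 b.2, add_assoc]
  one_mul a := by
    rw [Lamplighter.mul_def, Lamplighter.one_def]
    refine Prod.ext ?_ (zero_add _)
    show (0 : Lamps) + lampShift 0 a.1 = a.1
    rw [lampShift_zero, zero_add]
  mul_one a := by
    rw [Lamplighter.mul_def, Lamplighter.one_def]
    refine Prod.ext ?_ (add_zero _)
    show a.1 + lampShift a.2 (0 : Lamps) = a.1
    rw [lampShift, Finsupp.mapDomain_zero, add_zero]
  inv_mul_cancel a := by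
    rw [Lamplighter.mul_def, Lamplighter.inv_def, Lamplighter.one_def]
    refine Prod.ext ?_ (neg_add_cancel _)
    show lampShift (-a.2) a.1 + lampShift (-a.2) a.1 = (0 : Lamps)
    ext i
    have h2 : ∀ x : ZMod 2, x + x = 0 := by decide
    simp [h2]

/-- The generator `a` of the lamplighter group: the lamp at the origin is lit, the
lamplighter points at the origin. -/
noncomputable def Lamplighter.a : Lamplighter := (Finsupp.single 0 1, 0)

/-- The generator `t` of the lamplighter group: all lamps unlit, the lamplighter
points at position `1`. -/
def Lamplighter.t : Lamplighter := ((0 : Lamps), 1)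

end CAG

namespace CAG
namespace LWL

open Lamplighter

abbrev A : Set Lamplighter := {Lamplighter.a, Lamplighter.t}

lemma snd_mul (g h : Lamplighter) : (g * h).2 = g.2 + h.2 := rfl
lemma fst_mul (g h : Lamplighter) : (g * h).1 = g.1 + lampShift g.2 h.1 := rfl

/-- constructor staying in `Lamplighter` -/
def L (f : Lamps) (m : ℤ) : Lamplighter := (f, m)

@[simp] lemma L_fst (f : Lamps) (m : ℤ) : (L f m).1 = f := rfl
@[simp] lemma L_snd (f : Lamps) (m : ℤ) : (L f m).2 = m := rfl
lemma L_eta (g : Lamplighter) : L g.1 g.2 = g := rfl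

lemma L_mul (f f' : Lamps) (m m' : ℤ) :
    L f m * L f' m' = L (f + lampShift m f') (m + m') :=
  Lamplighter.mul_def _ _

lemma a_eq : Lamplighter.a = L (Finsupp.single 0 1) 0 := rfl
lemma t_eq : Lamplighter.t = L 0 1 := rfl

lemma a_inv : (Lamplighter.a)⁻¹ = Lamplighter.a := by
  rw [Lamplighter.inv_def]
  show ((lampShift (-0) a.1, -0) : Lamps × ℤ) = a
  norm_num [lampShift_zero, Lamplighter.a]

lemma t_inv : (Lamplighter.t)⁻¹ = L 0 (-1) := by
  rw [Lamplighter.inv_def]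
  show L (lampShift (-1) 0) (-1) = L 0 (-1)
  simp [lampShift, Finsupp.mapDomain_zero]

lemma ha : Lamplighter.a ∈ A ∪ A⁻¹ := Or.inl (Or.inl rfl)
lemma ht : Lamplighter.t ∈ A ∪ A⁻¹ := Or.inl (Or.inr rfl)
lemma ht' : (Lamplighter.t)⁻¹ ∈ A ∪ A⁻¹ := Or.inr (by simp [Set.mem_inv, Set.mem_insert_iff])

/-- classification of letters -/
lemma letter_cases (x : Lamplighter) (hx : x ∈ A ∪ A⁻¹) :
    x = Lamplighter.a ∨ x = Lamplighter.t ∨ x = (Lamplighter.t)⁻¹ := by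
  rcases hx with h | h
  · rcases h with h | h
    · exact Or.inl h
    · exact Or.inr (Or.inl h)
  · rw [Set.mem_inv, Set.mem_insert_iff, Set.mem_singleton_iff] at h
    rcases h with h | h
    · left; rw [← a_inv, ← h, inv_inv]
    · right; right; rw [← h, inv_inv]

lemma eval_nil : eval A ([] : List (Alph A)) = 1 := rfl
lemma eval_cons (x : Alph A) (w : List (Alph A)) :
    eval A (x :: w) = x.val * eval A w := by
  exact List.prod_cons
lemma eval_append (w w' : List (Alph A)) :
    eval A (w ++ w') = eval A w * eval A w' := by
  exact (congrArg List.prod (List.map_append (f := Subtype.val))).trans List.prod_append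

lemma t_pow (n : ℕ) : (Lamplighter.t : Lamplighter) ^ n = L 0 (n : ℤ) := by
  induction n with
  | zero => rfl
  | succ n ih =>
    rw [pow_succ, ih, t_eq, L_mul]
    simp [lampShift, Finsupp.mapDomain_zero]

lemma tinv_pow (n : ℕ) : ((Lamplighter.t)⁻¹ : Lamplighter) ^ n = L 0 (-(n : ℤ)) := by
  induction n with
  | zero => rfl
  | succ n ih =>
    rw [pow_succ, ih, t_inv, L_mul]
    simp only [lampShift, Finsupp.mapDomain_zero, add_zero]
    congr 1
    push_cast
    ring

/-- existence of a short word -/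
def PredZ (g : Lamplighter) (b : ℤ) : Prop :=
  ∃ w : List (Alph A), eval A w = g ∧ (w.length : ℤ) ≤ b

lemma PredZ.mul {g h : Lamplighter} {b c : ℤ} (hg : PredZ g b) (hh : PredZ h c) :
    PredZ (g * h) (b + c) := by
  obtain ⟨w1, e1, l1⟩ := hg
  obtain ⟨w2, e2, l2⟩ := hh
  exact ⟨w1 ++ w2, by rw [eval_append, e1, e2], by push_cast [List.length_append]; linarith⟩

lemma predZ_a : PredZ Lamplighter.a 1 :=
  ⟨[⟨Lamplighter.a, ha⟩], by exact mul_one _, le_refl _⟩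

lemma predZ_tpow (s : ℤ) : PredZ (L 0 s) |s| := by
  rcases le_or_gt 0 s with hs | hs
  · refine ⟨List.replicate s.toNat ⟨Lamplighter.t, ht⟩, ?_, ?_⟩
    · refine ((congrArg List.prod (List.map_replicate (f := Subtype.val))).trans (List.prod_replicate _ _)).trans ?_
      rw [t_pow]
      congr 1
      omega
    · exact (congrArg (fun n : ℕ => (n : ℤ)) List.length_replicate).le.trans (by rw [abs_of_nonneg hs]; omega)
  · refine ⟨List.replicate (-s).toNat ⟨(Lamplighter.t)⁻¹, ht'⟩, ?_, ?_⟩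
    · refine ((congrArg List.prod (List.map_replicate (f := Subtype.val))).trans (List.prod_replicate _ _)).trans ?_
      rw [tinv_pow]
      congr 1
      omega
    · exact (congrArg (fun n : ℕ => (n : ℤ)) List.length_replicate).le.trans (by rw [abs_of_neg hs]; omega)

lemma PredZ.mono {g : Lamplighter} {b c : ℤ} (h : PredZ g b) (hbc : b ≤ c) : PredZ g c := by
  obtain ⟨w, e, l⟩ := h; exact ⟨w, e, l.trans hbc⟩

/-! ### chunk 2 : sums of singles and sweep words -/

noncomputable def E (S : Finset ℤ) : Lamps := ∑ p ∈ S, Finsupp.single p (1 : ZMod 2)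

lemma lampShift_single (d p : ℤ) (b : ZMod 2) :
    lampShift d (Finsupp.single p b) = Finsupp.single (p + d) b :=
  Finsupp.mapDomain_single

lemma lampShift_E (d : ℤ) (S : Finset ℤ) : lampShift d (E S) = E (S.image (· + d)) := by
  unfold E lampShift
  rw [Finsupp.mapDomain_finset_sum, Finset.sum_image (by intro x _ y _ h; exact add_right_cancel h)]
  exact Finset.sum_congr rfl fun p _ => Finsupp.mapDomain_single

lemma sweep_decomp (S : Finset ℤ) (c p₀ : ℤ) (hp₀ : p₀ ∈ S) :
    L (E S) c = L 0 p₀ * Lamplighter.a * L (E ((S.erase p₀).image (· + (-p₀)))) (c - p₀) := by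
  rw [a_eq, L_mul, L_mul]
  simp only [zero_add, add_zero, lampShift_single, lampShift_E, Finset.image_image]
  have h1 : ((· + p₀) ∘ (· + (-p₀))) = id := by funext x; simp
  rw [h1, Finset.image_id]
  congr 1
  · exact (Finset.add_sum_erase S (fun p => Finsupp.single p (1 : ZMod 2)) hp₀).symm
  · ring

lemma card_shift_erase (S : Finset ℤ) (p₀ : ℤ) (hp₀ : p₀ ∈ S) :
    ((S.erase p₀).image (· + (-p₀))).card = S.card - 1 := by
  rw [Finset.card_image_of_injective _ (fun x y h => by omega),
    Finset.card_erase_of_mem hp₀]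

lemma sweep_right (n : ℕ) : ∀ (S : Finset ℤ) (c : ℤ), S.card ≤ n → 0 ≤ c →
    (∀ p ∈ S, 0 ≤ p ∧ p ≤ c) → PredZ (L (E S) c) (S.card + c) := by
  induction n with
  | zero =>
    intro S c hn hc _
    have hS : S = ∅ := Finset.card_eq_zero.mp (Nat.le_zero.mp hn)
    subst hS
    simp only [E, Finset.sum_empty, Finset.card_empty, Nat.cast_zero, zero_add]
    exact (predZ_tpow c).mono (by rw [abs_of_nonneg hc])
  | succ n ih =>
    intro S c hn hc hS
    rcases S.eq_empty_or_nonempty with hS0 | hS0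
    · subst hS0
      simp only [E, Finset.sum_empty, Finset.card_empty, Nat.cast_zero, zero_add]
      exact (predZ_tpow c).mono (by rw [abs_of_nonneg hc])
    · set p₀ := S.min' hS0 with hp₀def
      have hp₀S : p₀ ∈ S := S.min'_mem hS0
      have hp₀0 : 0 ≤ p₀ := (hS _ hp₀S).1
      have hp₀c : p₀ ≤ c := (hS _ hp₀S).2
      set S' := (S.erase p₀).image (· + (-p₀)) with hS'def
      have hcard : S'.card = S.card - 1 := card_shift_erase S p₀ hp₀S
      have hpos : 1 ≤ S.card := Finset.card_pos.mpr hS0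
      have h1 : PredZ (L 0 p₀) p₀ := (predZ_tpow p₀).mono (by rw [abs_of_nonneg hp₀0])
      have h3 : PredZ (L (E S') (c - p₀)) (S'.card + (c - p₀)) := by
        refine ih S' (c - p₀) (by omega) (by omega) ?_
        intro q hq
        simp only [hS'def, Finset.mem_image, Finset.mem_erase] at hq
        obtain ⟨p, ⟨hpne, hpS⟩, rfl⟩ := hq
        have := (hS p hpS).2
        have := S.min'_le p hpS
        omega
      have := (h1.mul predZ_a).mul h3
      rw [← sweep_decomp S c p₀ hp₀S] at this
      refine this.mono ?_
      rw [hcard]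
      push_cast [hpos]
      omega

lemma sweep_left (n : ℕ) : ∀ (S : Finset ℤ) (b : ℤ), S.card ≤ n → b ≤ 0 →
    (∀ p ∈ S, b ≤ p ∧ p ≤ 0) → PredZ (L (E S) b) (S.card - b) := by
  induction n with
  | zero =>
    intro S b hn hb _
    have hS : S = ∅ := Finset.card_eq_zero.mp (Nat.le_zero.mp hn)
    subst hS
    simp only [E, Finset.sum_empty, Finset.card_empty, Nat.cast_zero, zero_sub]
    exact (predZ_tpow b).mono (by rw [abs_of_nonpos hb])
  | succ n ih =>
    intro S b hn hb hS
    rcases S.eq_empty_or_nonempty with hS0 | hS0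
    · subst hS0
      simp only [E, Finset.sum_empty, Finset.card_empty, Nat.cast_zero, zero_sub]
      exact (predZ_tpow b).mono (by rw [abs_of_nonpos hb])
    · set p₀ := S.max' hS0 with hp₀def
      have hp₀S : p₀ ∈ S := S.max'_mem hS0
      have hp₀0 : p₀ ≤ 0 := (hS _ hp₀S).2
      have hp₀b : b ≤ p₀ := (hS _ hp₀S).1
      set S' := (S.erase p₀).image (· + (-p₀)) with hS'def
      have hcard : S'.card = S.card - 1 := card_shift_erase S p₀ hp₀S
      have hpos : 1 ≤ S.card := Finset.card_pos.mpr hS0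
      have h1 : PredZ (L 0 p₀) (-p₀) := (predZ_tpow p₀).mono (by rw [abs_of_nonpos hp₀0])
      have h3 : PredZ (L (E S') (b - p₀)) (S'.card - (b - p₀)) := by
        refine ih S' (b - p₀) (by omega) (by omega) ?_
        intro q hq
        simp only [hS'def, Finset.mem_image, Finset.mem_erase] at hq
        obtain ⟨p, ⟨hpne, hpS⟩, rfl⟩ := hq
        have := (hS p hpS).1
        have := S.le_max' p hpS
        omega
      have := (h1.mul predZ_a).mul h3
      rw [← sweep_decomp S b p₀ hp₀S] at this
      refine this.mono ?_
      rw [hcard]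
      push_cast [hpos]
      omega

/-! ### chunk 3 : walk lower bounds -/

def cost (l : List ℤ) : ℕ := l.countP (fun d => !decide (d = 0))

lemma cost_append (l1 l2 : List ℤ) : cost (l1 ++ l2) = cost l1 + cost l2 :=
  List.countP_append

lemma abs_sum_le_cost : ∀ l : List ℤ, (∀ d ∈ l, |d| ≤ 1) → |l.sum| ≤ (cost l : ℤ) := by
  intro l
  induction l with
  | nil => simp [cost]
  | cons d l ih =>
    intro h
    have h1 := ih (fun x hx => h x (List.mem_cons_of_mem _ hx))
    have h2 := h d List.mem_cons_self
    have h3 : |d + l.sum| ≤ |d| + |l.sum| := abs_add_le _ _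
    have hcc : cost (d :: l) = (if d = 0 then 0 else 1) + cost l := by
      unfold cost
      rw [List.countP_cons]
      by_cases hd : d = 0
      · simp [hd]
      · simp [hd]
        omega
    rw [List.sum_cons, hcc]
    by_cases hd : d = 0
    · subst hd
      simpa using h1
    · rw [if_neg hd]
      push_cast
      omega

lemma segment_bound (l : List ℤ) (hl : ∀ d ∈ l, |d| ≤ 1) (u v : ℕ) (huv : u ≤ v) :
    |(l.take u).sum| + |(l.take v).sum - (l.take u).sum| + |l.sum - (l.take v).sum|
      ≤ (cost l : ℤ) := by
  have hdec : l = l.take v ++ l.drop v := (List.take_append_drop v l).symm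
  have hdec2 : l.take v = (l.take v).take u ++ (l.take v).drop u :=
    (List.take_append_drop u (l.take v)).symm
  have htt : (l.take v).take u = l.take u := by
    rw [List.take_take, min_eq_left huv]
  have hsum : l.sum = (l.take v).sum + (l.drop v).sum := by
    conv_lhs => rw [hdec]
    rw [List.sum_append]
  have hsum2 : (l.take v).sum = (l.take u).sum + ((l.take v).drop u).sum := by
    conv_lhs => rw [hdec2]
    rw [List.sum_append, htt]
  have hcost : (cost l : ℤ) = cost (l.take u) + cost ((l.take v).drop u) + cost (l.drop v) := by
    conv_lhs => rw [hdec, hdec2, htt]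
    push_cast [cost_append]
    ring
  have m1 : ∀ d ∈ l.take u, |d| ≤ 1 := fun d hd => hl d (List.mem_of_mem_take hd)
  have m2 : ∀ d ∈ (l.take v).drop u, |d| ≤ 1 :=
    fun d hd => hl d (List.mem_of_mem_take (List.mem_of_mem_drop hd))
  have m3 : ∀ d ∈ l.drop v, |d| ≤ 1 := fun d hd => hl d (List.mem_of_mem_drop hd)
  have b1 := abs_sum_le_cost _ m1
  have b2 := abs_sum_le_cost _ m2
  have b3 := abs_sum_le_cost _ m3
  have e2 : ((l.take v).drop u).sum = (l.take v).sum - (l.take u).sum := by omega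
  have e3 : (l.drop v).sum = l.sum - (l.take v).sum := by omega
  rw [e2] at b2
  rw [e3] at b3
  omega

lemma walk_bound (l : List ℤ) (hl : ∀ d ∈ l, |d| ≤ 1) (u v : ℕ) (c b : ℤ)
    (hu : (l.take u).sum = c) (hv : (l.take v).sum = b) (hc : 0 ≤ c) (hb : b ≤ 0) :
    min (2 * c - b + |l.sum - b|) (c - 2 * b + |l.sum - c|) ≤ (cost l : ℤ) := by
  rcases le_total u v with huv | huv
  · have := segment_bound l hl u v huv
    rw [hu, hv] at this
    rw [abs_of_nonneg hc, abs_of_nonpos (by omega : b - c ≤ 0)] at this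
    calc min (2 * c - b + |l.sum - b|) (c - 2 * b + |l.sum - c|)
        ≤ 2 * c - b + |l.sum - b| := min_le_left _ _
      _ ≤ (cost l : ℤ) := by omega
  · have := segment_bound l hl v u huv
    rw [hu, hv] at this
    rw [abs_of_nonpos hb, abs_of_nonneg (by omega : 0 ≤ c - b)] at this
    calc min (2 * c - b + |l.sum - b|) (c - 2 * b + |l.sum - c|)
        ≤ c - 2 * b + |l.sum - c| := min_le_right _ _
      _ ≤ (cost l : ℤ) := by omega

/-! ### chunk 4 : from words to walks -/

lemma lampShift_zero' (d : ℤ) : lampShift d (0 : Lamps) = 0 := Finsupp.mapDomain_zero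

lemma snd_eval (w : List (Alph A)) :
    (eval A w).2 = (w.map (fun x : Alph A => x.val.2)).sum := by
  induction w with
  | nil => rfl
  | cons x w ih => rw [eval_cons, snd_mul, List.map_cons, List.sum_cons, ih]

lemma a_snd : (Lamplighter.a).2 = 0 := rfl
lemma t_snd : (Lamplighter.t).2 = 1 := rfl
lemma tinv_snd : ((Lamplighter.t)⁻¹).2 = -1 := by rw [t_inv]; rfl

lemma abs_letter (x : Alph A) : |x.val.2| ≤ 1 := by
  rcases letter_cases x.val x.2 with h | h | h <;> rw [h]
  · rw [a_snd]; norm_num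
  · rw [t_snd]; norm_num
  · rw [tinv_snd]; norm_num

lemma fst_support_subset (x : Alph A) : x.val.1.support ⊆ {0} := by
  rcases letter_cases x.val x.2 with h | h | h <;> rw [h]
  · exact Finsupp.support_single_subset
  · show (0 : Lamps).support ⊆ {0}; simp
  · rw [t_inv]; show (0 : Lamps).support ⊆ {0}; simp

lemma fst_zero_of_step_ne (x : Alph A) (hx : x.val.2 ≠ 0) : x.val.1 = 0 := by
  rcases letter_cases x.val x.2 with h | h | h
  · exact absurd (h ▸ a_snd) hx
  · rw [h]; rfl
  · rw [h, t_inv]; rfl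

lemma visited (w : List (Alph A)) : ∀ p ∈ (eval A w).1.support, ∃ n, (eval A (w.take n)).2 = p := by
  induction w with
  | nil =>
    intro p hp
    rw [eval_nil, Lamplighter.one_def] at hp
    simp at hp
  | cons x w ih =>
    intro p hp
    rw [eval_cons, fst_mul] at hp
    rcases Finset.mem_union.mp (Finsupp.support_add hp) with h | h
    · have h0 : p = 0 := by simpa using fst_support_subset x h
      exact ⟨0, by simp [List.take_zero, eval_nil, Lamplighter.one_def, h0]⟩
    · obtain ⟨q, hq, rfl⟩ := Finset.mem_image.mp (Finsupp.mapDomain_support h)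
      obtain ⟨n, hn⟩ := ih q hq
      refine ⟨n + 1, ?_⟩
      rw [List.take_succ_cons, eval_cons, snd_mul, hn]
      ring

lemma card_le_countA (w : List (Alph A)) :
    (eval A w).1.support.card ≤ w.countP (fun x => decide (x.val.2 = 0)) := by
  induction w with
  | nil =>
    rw [eval_nil, Lamplighter.one_def]
    simp
  | cons x w ih =>
    rw [eval_cons, fst_mul]
    have hsub : ((x.val.1 + lampShift x.val.2 (eval A w).1).support : Finset ℤ)
        ⊆ x.val.1.support ∪ (eval A w).1.support.image (· + x.val.2) :=
      Finsupp.support_add.trans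
        (Finset.union_subset_union (subset_refl _) Finsupp.mapDomain_support)
    have hc := (Finset.card_le_card hsub).trans (Finset.card_union_le _ _)
    have himg : ((eval A w).1.support.image (· + x.val.2)).card ≤ (eval A w).1.support.card :=
      Finset.card_image_le
    by_cases hx : x.val.2 = 0
    · have h1 : x.val.1.support.card ≤ 1 :=
        (Finset.card_le_card (fst_support_subset x)).trans (by simp)
      have hs : (x :: w).countP (fun y => decide (y.val.2 = 0))
          = w.countP (fun y => decide (y.val.2 = 0)) + 1 := by
        rw [List.countP_cons]; simp [hx]
      rw [hs]
      omega
    · have h0 : x.val.1 = 0 := fst_zero_of_step_ne x hx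
      rw [h0] at hc ⊢
      simp only [Finsupp.support_zero, Finset.card_empty] at hc
      have hs : (x :: w).countP (fun y => decide (y.val.2 = 0))
          = w.countP (fun y => decide (y.val.2 = 0)) := by
        rw [List.countP_cons]; simp [hx]
      rw [hs]
      omega

lemma lower (w : List (Alph A)) (c b : ℤ) (hc : 0 ≤ c) (hb : b ≤ 0)
    (hcvis : c = 0 ∨ c ∈ (eval A w).1.support) (hbvis : b = 0 ∨ b ∈ (eval A w).1.support) :
    ((eval A w).1.support.card : ℤ) +
      min (2 * c - b + |(eval A w).2 - b|) (c - 2 * b + |(eval A w).2 - c|)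
      ≤ (w.length : ℤ) := by
  set l := w.map (fun x : Alph A => x.val.2) with hl
  have visit : ∀ p : ℤ, (p = 0 ∨ p ∈ (eval A w).1.support) → ∃ u : ℕ, (l.take u).sum = p := by
    intro p hp
    rcases hp with h | h
    · exact ⟨0, by simp [h]⟩
    · obtain ⟨n, hn⟩ := visited w p h
      refine ⟨n, ?_⟩
      rw [hl, ← List.map_take, ← snd_eval]
      exact hn
  obtain ⟨u, hu⟩ := visit c hcvis
  obtain ⟨v, hv⟩ := visit b hbvis
  have hmem : ∀ d ∈ l, |d| ≤ 1 := by
    intro d hd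
    obtain ⟨x, _, rfl⟩ := List.mem_map.mp hd
    exact abs_letter x
  have hwalk := walk_bound l hmem u v c b hu hv hc hb
  have hm : (eval A w).2 = l.sum := snd_eval w
  have hcount := card_le_countA w
  have hsplit : w.length = w.countP (fun x => decide (x.val.2 = 0)) + cost l := by
    have h1 : cost l = w.countP (fun x => !decide (x.val.2 = 0)) := List.countP_map
    rw [h1, w.length_eq_countP_add_countP (fun x => decide (x.val.2 = 0))]
    refine congrArg _ (List.countP_congr ?_)
    intro a _
    simp
  rw [hm]
  have hcast : (w.length : ℤ)
      = (w.countP (fun x => decide (x.val.2 = 0)) : ℤ) + (cost l : ℤ) := by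
    rw [hsplit]; push_cast; ring
  rw [hcast]
  have : ((eval A w).1.support.card : ℤ) ≤ (w.countP (fun x => decide (x.val.2 = 0)) : ℤ) := by
    exact_mod_cast hcount
  linarith [hwalk]

end LWL
end CAG
open CAG in
/-- Word length formula in the lamplighter group `ℤ₂ ≀ ℤ` with respect to `A = {a, t}`:
for an element `g = (f, m)` whose lit lamps at non-negative positions are
`0 ≤ i₁ < … < i_k` and whose lit lamps at negative positions are `−j_l < … < −j₁ < 0`
(with `i_k = 0`, resp. `j_l = 0`, if there are no such lit lamps),
`d_A(g) = k + l + min(2·i_k + j_l + |m + j_l|, 2·j_l + i_k + |m − i_k|)`. -/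
theorem lamplighter_word_length (g : Lamplighter) :
    let P : Finset ℤ := g.1.support.filter (fun i => 0 ≤ i)
    let N : Finset ℤ := g.1.support.filter (fun i => i < 0)
    let ik : ℤ := P.max.unbotD 0
    let jl : ℤ := -(N.min.untopD 0)
    (wordLength ({Lamplighter.a, Lamplighter.t} : Set Lamplighter) g : ℤ) =
      P.card + N.card +
        min (2 * ik + jl + |g.2 + jl|) (2 * jl + ik + |g.2 - ik|) := by
  intro P N ik jl
  have hPmem : ∀ p ∈ P, 0 ≤ p := fun p hp => (Finset.mem_filter.mp hp).2
  have hNmem : ∀ p ∈ N, p < 0 := fun p hp => (Finset.mem_filter.mp hp).2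
  have hPsup : ∀ p ∈ P, p ∈ g.1.support := fun p hp => (Finset.mem_filter.mp hp).1
  have hNsup : ∀ p ∈ N, p ∈ g.1.support := fun p hp => (Finset.mem_filter.mp hp).1
  have hik : (ik = 0 ∨ ik ∈ P) ∧ 0 ≤ ik ∧ ∀ p ∈ P, p ≤ ik := by
    rcases P.eq_empty_or_nonempty with h | h
    · have e : ik = 0 := by
        rw [show ik = P.max.unbotD 0 from rfl, h, Finset.max_empty]
        rfl
      refine ⟨Or.inl e, le_of_eq e.symm, fun p hp => ?_⟩
      rw [h] at hp
      simp at hp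
    · have e : ik = P.max' h := by
        rw [show ik = P.max.unbotD 0 from rfl, ← Finset.coe_max' h]
        rfl
      exact ⟨Or.inr (e ▸ P.max'_mem h), e ▸ hPmem _ (P.max'_mem h),
        fun p hp => e ▸ P.le_max' p hp⟩
  have hjl : (jl = 0 ∨ -jl ∈ N) ∧ 0 ≤ jl ∧ ∀ p ∈ N, -jl ≤ p := by
    rcases N.eq_empty_or_nonempty with h | h
    · have e : jl = 0 := by
        rw [show jl = -(N.min.untopD 0) from rfl, h, Finset.min_empty]
        rfl
      refine ⟨Or.inl e, le_of_eq e.symm, fun p hp => ?_⟩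
      rw [h] at hp
      simp at hp
    · have e : jl = -(N.min' h) := by
        rw [show jl = -(N.min.untopD 0) from rfl, ← Finset.coe_min' h]
        rfl
      have hmm := N.min'_mem h
      refine ⟨Or.inr (by rw [e, neg_neg]; exact hmm), ?_, fun p hp => ?_⟩
      · have := hNmem _ hmm
        omega
      · have := N.min'_le p hp
        omega
  have hNalt : N = g.1.support.filter (fun i => ¬ 0 ≤ i) := by
    apply Finset.filter_congr
    intro x _
    simp [not_le]
  have hunion : P ∪ N = g.1.support := by
    rw [hNalt]
    exact Finset.filter_union_filter_not_eq (p := fun i => 0 ≤ i) _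
  have hcard : P.card + N.card = g.1.support.card := by
    rw [hNalt]
    exact Finset.card_filter_add_card_filter_not _
  have hdisj : Disjoint P N := by
    rw [Finset.disjoint_left]
    intro p hp hn
    exact absurd (hPmem p hp) (not_le.mpr (hNmem p hn))
  have hE : LWL.E g.1.support = g.1 := by
    rw [LWL.E]
    conv_rhs => rw [← Finsupp.sum_single g.1]
    rw [Finsupp.sum]
    refine Finset.sum_congr rfl fun p hp => ?_
    have h1 : g.1 p = 1 := by
      have := Finsupp.mem_support_iff.mp hp
      revert this
      generalize g.1 p = x
      revert x
      decide
    rw [h1]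
  have hEPN : LWL.E P + LWL.E N = g.1 := by
    have h1 : LWL.E (P ∪ N) = LWL.E P + LWL.E N := by
      rw [LWL.E, LWL.E, LWL.E, Finset.sum_union hdisj]
    rw [← h1, hunion, hE]
  -- upper bound, branch 1 (sweep right first)
  have hb1 : LWL.PredZ g ((P.card : ℤ) + N.card + (2 * ik + jl + |g.2 + jl|)) := by
    have s1 := LWL.sweep_right P.card P ik le_rfl hik.2.1
      (fun p hp => ⟨hPmem p hp, hik.2.2 p hp⟩)
    have hcard₂ : (N.image (· + (-ik))).card = N.card :=
      Finset.card_image_of_injective _ (fun x y h => by omega)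
    have s2 := LWL.sweep_left (N.image (· + (-ik))).card (N.image (· + (-ik))) (-ik - jl)
      le_rfl (by have := hik.2.1; have := hjl.2.1; omega) ?_
    · have s3 := LWL.predZ_tpow (g.2 + jl)
      have hprod := s1.mul (s2.mul s3)
      have hdec : LWL.L (LWL.E P) ik *
          (LWL.L (LWL.E (N.image (· + (-ik)))) (-ik - jl) * LWL.L 0 (g.2 + jl)) = g := by
        rw [LWL.L_mul, LWL.lampShift_zero', add_zero, LWL.L_mul, LWL.lampShift_E,
          Finset.image_image]
        have hid : ((· + ik) ∘ (· + (-ik))) = id := funext fun x => by simp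
        rw [hid, Finset.image_id, hEPN]
        conv_rhs => rw [← LWL.L_eta g]
        congr 1
        ring
      rw [hdec] at hprod
      refine hprod.mono ?_
      rw [hcard₂]
      have := hik.2.1
      have := hjl.2.1
      omega
    · intro q hq
      obtain ⟨p, hpN, rfl⟩ := Finset.mem_image.mp hq
      have h1 := hNmem p hpN
      have h2 := hjl.2.2 p hpN
      have := hik.2.1
      constructor <;> omega
  -- upper bound, branch 2 (sweep left first)
  have hb2 : LWL.PredZ g ((P.card : ℤ) + N.card + (2 * jl + ik + |g.2 - ik|)) := by
    have s1 := LWL.sweep_left N.card N (-jl) le_rfl (by have := hjl.2.1; omega)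
      (fun p hp => ⟨hjl.2.2 p hp, le_of_lt (hNmem p hp)⟩)
    have hcard₂ : (P.image (· + jl)).card = P.card :=
      Finset.card_image_of_injective _ (fun x y h => by omega)
    have s2 := LWL.sweep_right (P.image (· + jl)).card (P.image (· + jl)) (ik + jl)
      le_rfl (by have := hik.2.1; have := hjl.2.1; omega) ?_
    · have s3 := LWL.predZ_tpow (g.2 - ik)
      have hprod := s1.mul (s2.mul s3)
      have hdec : LWL.L (LWL.E N) (-jl) *
          (LWL.L (LWL.E (P.image (· + jl))) (ik + jl) * LWL.L 0 (g.2 - ik)) = g := by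
        rw [LWL.L_mul, LWL.lampShift_zero', add_zero, LWL.L_mul, LWL.lampShift_E,
          Finset.image_image]
        have hid : ((· + (-jl)) ∘ (· + jl)) = id := funext fun x => by simp
        rw [hid, Finset.image_id, add_comm (LWL.E N) (LWL.E P), hEPN]
        conv_rhs => rw [← LWL.L_eta g]
        congr 1
        ring
      rw [hdec] at hprod
      refine hprod.mono ?_
      rw [hcard₂]
      have := hik.2.1
      have := hjl.2.1
      omega
    · intro q hq
      obtain ⟨p, hpP, rfl⟩ := Finset.mem_image.mp hq
      have h1 := hPmem p hpP
      have h2 := hik.2.2 p hpP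
      have := hjl.2.1
      constructor <;> omega
  -- convert upper bounds to wordLength bounds
  have hub : ∀ B : ℤ, LWL.PredZ g B →
      (wordLength ({Lamplighter.a, Lamplighter.t} : Set Lamplighter) g : ℤ) ≤ B := by
    intro B hB
    obtain ⟨w, he, hlen⟩ := hB
    have h1 : wordLength ({Lamplighter.a, Lamplighter.t} : Set Lamplighter) g ≤ w.length :=
      Nat.sInf_le ⟨w, he, rfl⟩
    have h2 : ((wordLength ({Lamplighter.a, Lamplighter.t} : Set Lamplighter) g : ℕ) : ℤ)
        ≤ (w.length : ℤ) := by exact_mod_cast h1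
    linarith
  have hub1 := hub _ hb1
  have hub2 := hub _ hb2
  -- lower bound
  have hlb : (P.card : ℤ) + N.card +
      min (2 * ik + jl + |g.2 + jl|) (2 * jl + ik + |g.2 - ik|)
      ≤ (wordLength ({Lamplighter.a, Lamplighter.t} : Set Lamplighter) g : ℤ) := by
    obtain ⟨w1, he1, _⟩ := hb1
    have hne : {n | ∃ w : List (Alph LWL.A), eval LWL.A w = g ∧ w.length = n}.Nonempty :=
      ⟨w1.length, w1, he1, rfl⟩
    obtain ⟨w₀, he₀, hlen₀⟩ := Nat.sInf_mem hne
    have hlow := LWL.lower w₀ ik (-jl) hik.2.1 (by have := hjl.2.1; omega) ?_ ?_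
    · rw [he₀] at hlow
      have e1 : 2 * ik - (-jl) = 2 * ik + jl := by ring
      have e2 : g.2 - (-jl) = g.2 + jl := by ring
      have e3 : ik - 2 * (-jl) = 2 * jl + ik := by ring
      rw [e1, e2, e3] at hlow
      have hwl : w₀.length = wordLength ({Lamplighter.a, Lamplighter.t} : Set Lamplighter) g :=
        hlen₀
      rw [hwl] at hlow
      have hcard' : (P.card : ℤ) + N.card = (g.1.support.card : ℤ) := by exact_mod_cast hcard
      omega
    · rw [he₀]
      exact hik.1.imp (fun h => h) (fun h => hPsup _ h)
    · rw [he₀]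
      rcases hjl.1 with h | h
      · exact Or.inl (by omega)
      · exact Or.inr (hNsup _ h)
  omega
end

section
/- For every function f ∈ 𝔉 with f ≺ 𝔦 (where 𝔦(n) = n), the lamplighter group ℤ₂ ≀ ℤ does not belong to the class ℬ_f. -/
namespace CAG

noncomputable section
open List

/-- The generating set of the lamplighter group. -/
def ATset : Set Lamplighter := {Lamplighter.a, Lamplighter.t}

abbrev Wd := List (Alph ATset)

/-! ### generic eval / wordLength toolkit -/

variable {G : Type*} [Group G]

lemma eval_nil (A : Set G) : eval A ([] : List (Alph A)) = 1 := rfl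

lemma eval_append (A : Set G) (w₁ w₂ : List (Alph A)) :
    eval A (w₁ ++ w₂) = eval A w₁ * eval A w₂ := by
  simp [eval]; exact (congrArg List.prod (List.map_append (f := (Subtype.val : Alph A → G)))).trans (List.prod_append (α := G))

lemma eval_singleton (A : Set G) (x : Alph A) : eval A [x] = x.1 := by
  simp [eval]; exact List.prod_singleton

lemma wordLength_le (A : Set G) {g : G} {w : List (Alph A)} (h : eval A w = g) :
    wordLength A g ≤ w.length :=
  Nat.sInf_le ⟨w, h, rfl⟩

lemma exists_word_of (A : Set G) {g : G} (hg : ∃ w : List (Alph A), eval A w = g) :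
    ∃ w : List (Alph A), eval A w = g ∧ w.length = wordLength A g := by
  obtain ⟨w0, hw0⟩ := hg
  have hne : {n | ∃ w : List (Alph A), eval A w = g ∧ w.length = n}.Nonempty :=
    ⟨w0.length, w0, hw0, rfl⟩
  exact Nat.sInf_mem hne

def linv (A : Set G) (x : Alph A) : Alph A :=
  ⟨x.1⁻¹, by
    rcases x.2 with h | h
    · exact Or.inr (by simpa using h)
    · exact Or.inl (by simpa using h)⟩

@[simp] lemma linv_val (A : Set G) (x : Alph A) : (linv A x).1 = x.1⁻¹ := rfl

def winv (A : Set G) (w : List (Alph A)) : List (Alph A) := (w.map (linv A)).reverse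

@[simp] lemma winv_length (A : Set G) (w : List (Alph A)) : (winv A w).length = w.length := by
  simp [winv]

lemma eval_winv (A : Set G) (w : List (Alph A)) : eval A (winv A w) = (eval A w)⁻¹ := by
  induction w with
  | nil => simp [winv, eval]; exact inv_one.symm
  | cons x w ih =>
      have h1 : winv A (x :: w) = winv A w ++ [linv A x] := by simp [winv]
      have h2 : eval A (x :: w) = x.1 * eval A w := by
        have : (x :: w) = [x] ++ w := rfl
        rw [this, eval_append, eval_singleton]
      rw [h1, eval_append, ih, eval_singleton, h2, mul_inv_rev, linv_val]

/-! ### Lamplighter letters and basic computations -/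

lemma ll_mul_snd (g h : Lamplighter) : (g * h).2 = g.2 + h.2 := rfl

def mkLL (f : Lamps) (k : ℤ) : Lamplighter := (f, k)

lemma LLext {x y : Lamplighter} (h1 : x.1 = y.1) (h2 : x.2 = y.2) : x = y := Prod.ext h1 h2

@[simp] lemma mkLL_fst (f : Lamps) (k : ℤ) : (mkLL f k).1 = f := rfl
@[simp] lemma mkLL_snd (f : Lamps) (k : ℤ) : (mkLL f k).2 = k := rfl

lemma ll_t_inv : (Lamplighter.t)⁻¹ = ((0 : Lamps), (-1 : ℤ)) := by
  rw [Lamplighter.inv_def]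
  unfold Lamplighter.t lampShift
  rw [Finsupp.mapDomain_zero]

lemma ll_a_inv : (Lamplighter.a)⁻¹ = Lamplighter.a := by
  rw [Lamplighter.inv_def]
  unfold Lamplighter.a
  rw [show (-(0:ℤ)) = 0 by ring, lampShift_zero]

def La : Alph ATset := ⟨Lamplighter.a, Or.inl (by simp [ATset])⟩
def Lt : Alph ATset := ⟨Lamplighter.t, Or.inl (by simp [ATset])⟩
def Lt' : Alph ATset := ⟨Lamplighter.t⁻¹, Or.inr (by
  simp only [Set.mem_inv, inv_inv]
  simp [ATset])⟩

@[simp] lemma La_val : (La).1 = Lamplighter.a := rfl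
@[simp] lemma Lt_val : (Lt).1 = Lamplighter.t := rfl
@[simp] lemma Lt'_val : (Lt').1 = Lamplighter.t⁻¹ := rfl

lemma ll_mul_t (g : Lamplighter) : g * Lamplighter.t = mkLL g.1 (g.2 + 1) := by
  rw [Lamplighter.mul_def]
  unfold Lamplighter.t mkLL lampShift
  rw [Finsupp.mapDomain_zero, add_zero]

lemma ll_mul_zm (g : Lamplighter) (m : ℤ) :
    g * mkLL 0 m = mkLL g.1 (g.2 + m) := by
  rw [Lamplighter.mul_def]
  unfold mkLL lampShift
  rw [Finsupp.mapDomain_zero, add_zero]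

lemma ll_mul_tinv (g : Lamplighter) :
    g * Lamplighter.t⁻¹ = mkLL g.1 (g.2 - 1) := by
  have h : Lamplighter.t⁻¹ = mkLL 0 (-1) := ll_t_inv
  rw [h, ll_mul_zm, sub_eq_add_neg]

lemma ll_mul_a (g : Lamplighter) :
    g * Lamplighter.a = mkLL (g.1 + Finsupp.single g.2 1) g.2 := by
  rw [Lamplighter.mul_def]
  unfold Lamplighter.a mkLL lampShift
  rw [Finsupp.mapDomain_single, zero_add, add_zero]

lemma ll_lmul_lamp (f₀ : Lamps) (g : Lamplighter) :
    mkLL f₀ 0 * g = mkLL (f₀ + g.1) g.2 := by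
  rw [Lamplighter.mul_def]
  unfold mkLL
  rw [lampShift_zero, zero_add]

lemma ll_one_def : (1 : Lamplighter) = (((0 : Lamps), (0 : ℤ)) : Lamplighter) := rfl

/-- the three letters of the alphabet -/
lemma letter_cases (x : Alph ATset) : x = La ∨ x = Lt ∨ x = Lt' := by
  have h2 := x.2
  rcases h2 with h | h
  · rcases h with h | h
    · exact Or.inl (Subtype.ext h)
    · exact Or.inr (Or.inl (Subtype.ext h))
  · simp only [Set.mem_inv] at h
    rcases h with h | h
    · left
      apply Subtype.ext
      have hx : x.1⁻¹ = Lamplighter.a := h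
      calc x.1 = (x.1⁻¹)⁻¹ := by rw [inv_inv]
        _ = Lamplighter.a := by rw [hx, ll_a_inv]
    · right; right
      apply Subtype.ext
      have hx : x.1⁻¹ = Lamplighter.t := h
      calc x.1 = (x.1⁻¹)⁻¹ := by rw [inv_inv]
        _ = Lamplighter.t⁻¹ := by rw [hx]

/-! ### generation: every lamplighter element is a word in the alphabet -/

def tw (k : ℤ) : Wd := if 0 ≤ k then List.replicate k.toNat Lt else List.replicate (-k).toNat Lt'

lemma eval_replicate_Lt (n : ℕ) :
    eval ATset (List.replicate n Lt) = mkLL 0 (n : ℤ) := by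
  induction n with
  | zero => rfl
  | succ n ih =>
      rw [List.replicate_succ', eval_append, ih, eval_singleton, Lt_val, ll_mul_t]
      exact LLext rfl (by simp only [mkLL_snd]; push_cast; ring)

lemma eval_replicate_Lt' (n : ℕ) :
    eval ATset (List.replicate n Lt') = mkLL 0 (-(n : ℤ)) := by
  induction n with
  | zero => rfl
  | succ n ih =>
      rw [List.replicate_succ', eval_append, ih, eval_singleton, Lt'_val, ll_mul_tinv]
      exact LLext (by simp only [mkLL_fst]) (by simp only [mkLL_snd]; push_cast; ring)

lemma eval_tw (k : ℤ) : eval ATset (tw k) = mkLL 0 k := by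
  unfold tw
  by_cases h : 0 ≤ k
  · rw [if_pos h, eval_replicate_Lt, Int.toNat_of_nonneg h]
  · rw [if_neg h, eval_replicate_Lt']
    have h2 : (((-k).toNat : ℤ)) = -k := Int.toNat_of_nonneg (by omega)
    rw [h2, neg_neg]

lemma tw_length (k : ℤ) : (tw k).length = k.natAbs := by
  unfold tw
  by_cases h : 0 ≤ k
  · rw [if_pos h]; simp; omega
  · rw [if_neg h]; simp; omega

lemma eval_single_word (i : ℤ) :
    eval ATset (tw i ++ La :: tw (-i)) = mkLL (Finsupp.single i 1) 0 := by
  have hc : (La :: tw (-i)) = [La] ++ tw (-i) := rfl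
  rw [eval_append, hc, eval_append, eval_tw, eval_tw, eval_singleton, La_val]
  rw [show Lamplighter.a * mkLL 0 (-i) = mkLL (Lamplighter.a).1 ((Lamplighter.a).2 + -i)
    from ll_mul_zm _ _]
  have ha1 : (Lamplighter.a).1 = Finsupp.single 0 1 := rfl
  have ha2 : (Lamplighter.a).2 = 0 := rfl
  rw [ha1, ha2, Lamplighter.mul_def]
  unfold mkLL lampShift
  rw [Finsupp.mapDomain_single]
  refine LLext ?_ ?_
  · show (0 : Lamps) + Finsupp.single (0 + i) 1 = Finsupp.single i 1
    rw [zero_add, zero_add]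
  · show i + (0 + -i) = 0
    ring

lemma exists_word_eval (g : Lamplighter) : ∃ w : Wd, eval ATset w = g := by
  obtain ⟨f, k⟩ := g
  induction f using Finsupp.induction with
  | zero => exact ⟨tw k, eval_tw k⟩
  | single_add i b f hif hb ih =>
      obtain ⟨w, hw⟩ := ih
      have hb1 : b = 1 := by
        have h01 : ∀ b : ZMod 2, b = 0 ∨ b = 1 := by decide
        rcases h01 b with h | h
        · exact absurd h hb
        · exact h
      refine ⟨(tw i ++ La :: tw (-i)) ++ w, ?_⟩
      rw [eval_append, hw, eval_single_word, hb1]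
      exact ll_lmul_lamp _ _

/-! ### conv algebra -/

section ConvLemmas

variable {α : Type*}

def fstD (w : List (Option α × Option α)) : List α := w.filterMap Prod.fst
def sndD (w : List (Option α × Option α)) : List α := w.filterMap Prod.snd

@[simp] lemma fstD_nil : fstD ([] : List (Option α × Option α)) = [] := rfl
@[simp] lemma sndD_nil : sndD ([] : List (Option α × Option α)) = [] := rfl

lemma fstD_append (w₁ w₂ : List (Option α × Option α)) :
    fstD (w₁ ++ w₂) = fstD w₁ ++ fstD w₂ := by simp [fstD]

lemma sndD_append (w₁ w₂ : List (Option α × Option α)) :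
    sndD (w₁ ++ w₂) = sndD w₁ ++ sndD w₂ := by simp [sndD]

lemma fstD_length_le (w : List (Option α × Option α)) : (fstD w).length ≤ w.length :=
  List.length_filterMap_le _ _

lemma sndD_length_le (w : List (Option α × Option α)) : (sndD w).length ≤ w.length :=
  List.length_filterMap_le _ _

@[simp] lemma conv_nil_nil : conv ([] : List α) [] = [] := by rw [conv]

lemma conv_nil_left (v : List α) :
    conv ([] : List α) v = v.map (fun b => ((none : Option α), some b)) := by
  induction v with
  | nil => simp
  | cons b bs ih => rw [conv, ih]; rfl

lemma conv_nil_right (u : List α) :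
    conv u ([] : List α) = u.map (fun a => (some a, (none : Option α))) := by
  induction u with
  | nil => simp
  | cons a as ih => rw [conv, ih]; rfl

lemma fstD_pad_right (v : List α) :
    fstD (v.map (fun b => ((none : Option α), some b))) = [] := by
  induction v with
  | nil => rfl
  | cons b bs ih => simpa [fstD, List.filterMap_cons] using ih

lemma sndD_pad_left (u : List α) :
    sndD (u.map (fun a => (some a, (none : Option α)))) = [] := by
  induction u with
  | nil => rfl
  | cons a as ih => simpa [sndD, List.filterMap_cons] using ih

lemma sndD_pad_right (v : List α) :
    sndD (v.map (fun b => ((none : Option α), some b))) = v := by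
  induction v with
  | nil => rfl
  | cons b bs ih => simpa [sndD, List.filterMap_cons] using ih

lemma fstD_pad_left (u : List α) :
    fstD (u.map (fun a => (some a, (none : Option α)))) = u := by
  induction u with
  | nil => rfl
  | cons a as ih => simpa [fstD, List.filterMap_cons] using ih

lemma fstD_conv (u : List α) : ∀ v : List α, fstD (conv u v) = u := by
  induction u with
  | nil => intro v; rw [conv_nil_left, fstD_pad_right]
  | cons a as ih =>
      intro v
      cases v with
      | nil =>
          rw [conv]
          show a :: fstD (conv as []) = a :: as
          rw [ih]
      | cons b bs =>
          rw [conv]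
          show a :: fstD (conv as bs) = a :: as
          rw [ih]

lemma sndD_conv (u : List α) : ∀ v : List α, sndD (conv u v) = v := by
  induction u with
  | nil =>
      intro v; rw [conv_nil_left, sndD_pad_right]
  | cons a as ih =>
      intro v
      cases v with
      | nil =>
          rw [conv]
          show sndD (conv as []) = []
          rw [conv_nil_right, sndD_pad_left]
      | cons b bs =>
          rw [conv]
          show b :: sndD (conv as bs) = b :: bs
          rw [ih]

lemma conv_length (u : List α) : ∀ v : List α, (conv u v).length = max u.length v.length := by
  induction u with
  | nil => intro v; rw [conv_nil_left]; simp
  | cons a as ih =>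
      intro v
      cases v with
      | nil =>
          rw [conv]
          show (conv as []).length + 1 = _
          rw [ih]
          simp
      | cons b bs =>
          rw [conv]
          show (conv as bs).length + 1 = _
          rw [ih]
          simp [Nat.succ_max_succ]

lemma conv_take (u : List α) : ∀ (v : List α) (i : ℕ),
    (conv u v).take i = conv (u.take i) (v.take i) := by
  induction u with
  | nil =>
      intro v i
      rw [conv_nil_left, List.take_nil, conv_nil_left, List.map_take]
  | cons a as ih =>
      intro v i
      cases v with
      | nil =>
          rw [List.take_nil, conv_nil_right, conv_nil_right, ← List.map_take]
      | cons b bs =>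
          cases i with
          | zero => simp
          | succ i =>
              rw [conv]
              show ((some a, some b) :: conv as bs).take (i+1) = _
              rw [List.take_succ_cons, ih, List.take_succ_cons, List.take_succ_cons, conv]

lemma conv_pad_right (u : List α) : ∀ (v : List α), u.length ≤ v.length →
    conv u v = conv u (v.take u.length) ++
      (v.drop u.length).map (fun b => ((none : Option α), some b)) := by
  induction u with
  | nil =>
      intro v _
      rw [conv_nil_left]
      show _ = conv [] [] ++ _
      rw [conv]
      simp
  | cons a as ih =>
      intro v hv
      cases v with
      | nil => simp at hv
      | cons b bs =>
          rw [conv]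
          show (some a, some b) :: conv as bs = _
          have hlen : as.length ≤ bs.length := by simpa using hv
          rw [ih bs hlen]
          rw [List.length_cons, List.take_succ_cons, List.drop_succ_cons, conv]
          rfl

lemma conv_pad_left (u : List α) : ∀ (v : List α), v.length ≤ u.length →
    conv u v = conv (u.take v.length) v ++
      (u.drop v.length).map (fun a => (some a, (none : Option α))) := by
  induction u with
  | nil =>
      intro v hv
      have : v = [] := by
        cases v with
        | nil => rfl
        | cons x xs => simp at hv
      subst this
      simp
  | cons a as ih =>
      intro v hv
      cases v with
      | nil =>
          rw [conv_nil_right]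
          show _ = conv [] [] ++ _
          rw [conv]
          simp
      | cons b bs =>
          rw [conv]
          show (some a, some b) :: conv as bs = _
          have hlen : bs.length ≤ as.length := by simpa using hv
          rw [ih bs hlen]
          rw [List.length_cons, List.take_succ_cons, List.drop_succ_cons, conv]
          rfl

lemma fstD_all_none (w : List (Option α × Option α)) (h : ∀ c ∈ w, c.1 = none) :
    fstD w = [] := by
  induction w with
  | nil => rfl
  | cons c cs ih =>
      have hc : c.1 = none := h c (by simp)
      unfold fstD
      rw [List.filterMap_cons, hc]
      exact ih (fun d hd => h d (by simp [hd]))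

lemma sndD_all_none (w : List (Option α × Option α)) (h : ∀ c ∈ w, c.2 = none) :
    sndD w = [] := by
  induction w with
  | nil => rfl
  | cons c cs ih =>
      have hc : c.2 = none := h c (by simp)
      unfold sndD
      rw [List.filterMap_cons, hc]
      exact ih (fun d hd => h d (by simp [hd]))

end ConvLemmas

/-! ### DFA pigeonhole lemmas -/

section DFALemmas

variable {β σ : Type*} [Fintype σ]

lemma dfa_short_aux (M : DFA β σ) (s : σ) :
    ∀ n, ∀ x : List β, x.length ≤ n → M.evalFrom s x ∈ M.accept →
      ∃ y : List β, y.length ≤ Fintype.card σ ∧ M.evalFrom s y ∈ M.accept := by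
  intro n
  induction n with
  | zero =>
      intro x hx hacc
      exact ⟨x, le_trans hx (Nat.zero_le _), hacc⟩
  | succ n ih =>
      intro x hx hacc
      by_cases hcard : x.length ≤ Fintype.card σ
      · exact ⟨x, hcard, hacc⟩
      · push_neg at hcard
        obtain ⟨i, j, hij, heq⟩ := Fintype.exists_ne_map_eq_of_card_lt
            (fun i : Fin (Fintype.card σ + 1) => M.evalFrom s (x.take i)) (by simp)
        have hij' : (i : ℕ) ≠ (j : ℕ) := fun h => hij (Fin.ext h)
        -- wlog i < j
        have h1 : (i:ℕ) ≤ x.length := le_trans (by omega : (i:ℕ) ≤ Fintype.card σ) (le_of_lt hcard)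
        have h2 : (j:ℕ) ≤ x.length := le_trans (by omega : (j:ℕ) ≤ Fintype.card σ) (le_of_lt hcard)
        rcases hij'.lt_or_gt with hlt | hlt
        · refine ih (x.take i ++ x.drop j) ?_ ?_
          · simp only [List.length_append, List.length_take, List.length_drop]
            omega
          · rw [DFA.evalFrom_of_append, heq, ← DFA.evalFrom_of_append, List.take_append_drop]
            exact hacc
        · refine ih (x.take j ++ x.drop i) ?_ ?_
          · simp only [List.length_append, List.length_take, List.length_drop]
            omega
          · rw [DFA.evalFrom_of_append, ← heq, ← DFA.evalFrom_of_append, List.take_append_drop]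
            exact hacc

lemma dfa_short (M : DFA β σ) (s : σ) (x : List β) (hacc : M.evalFrom s x ∈ M.accept) :
    ∃ y : List β, y.length ≤ Fintype.card σ ∧ M.evalFrom s y ∈ M.accept :=
  dfa_short_aux M s x.length x le_rfl hacc

lemma dfa_cut_suffix (M : DFA β σ) (w₁ w₂ : List β)
    (h : Fintype.card σ + 1 ≤ w₂.length) (hacc : (w₁ ++ w₂) ∈ M.accepts) :
    ∃ w₂' : List β, w₂'.length < w₂.length ∧ (∀ c ∈ w₂', c ∈ w₂) ∧ (w₁ ++ w₂') ∈ M.accepts := by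
  rw [DFA.mem_accepts] at hacc
  unfold DFA.eval at hacc
  rw [DFA.evalFrom_of_append] at hacc
  set s₁ := M.evalFrom M.start w₁ with hs₁
  obtain ⟨i, j, hij, heq⟩ := Fintype.exists_ne_map_eq_of_card_lt
      (fun i : Fin (Fintype.card σ + 1) => M.evalFrom s₁ (w₂.take i)) (by simp)
  have hij' : (i : ℕ) ≠ (j : ℕ) := fun hh => hij (Fin.ext hh)
  have hi : (i:ℕ) ≤ w₂.length := le_trans (by omega : (i:ℕ) ≤ Fintype.card σ) (by omega)
  have hj : (j:ℕ) ≤ w₂.length := le_trans (by omega : (j:ℕ) ≤ Fintype.card σ) (by omega)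
  rcases hij'.lt_or_gt with hlt | hlt
  · refine ⟨w₂.take i ++ w₂.drop j, ?_, ?_, ?_⟩
    · simp only [List.length_append, List.length_take, List.length_drop]; omega
    · intro c hc
      rcases List.mem_append.1 hc with hc | hc
      · exact List.take_subset _ _ hc
      · exact List.drop_subset _ _ hc
    · rw [DFA.mem_accepts]
      unfold DFA.eval
      rw [DFA.evalFrom_of_append, ← hs₁, DFA.evalFrom_of_append, heq,
        ← DFA.evalFrom_of_append, List.take_append_drop]
      exact hacc
  · refine ⟨w₂.take j ++ w₂.drop i, ?_, ?_, ?_⟩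
    · simp only [List.length_append, List.length_take, List.length_drop]; omega
    · intro c hc
      rcases List.mem_append.1 hc with hc | hc
      · exact List.take_subset _ _ hc
      · exact List.drop_subset _ _ hc
    · rw [DFA.mem_accepts]
      unfold DFA.eval
      rw [DFA.evalFrom_of_append, ← hs₁, DFA.evalFrom_of_append, ← heq,
        ← DFA.evalFrom_of_append, List.take_append_drop]
      exact hacc

end DFALemmas


/-! ### The permutation model -/

section PermModel

open scoped Classical

abbrev XX := Lamps

variable (r : ℕ)

def flipA (p : ℤ) (x : XX) : XX := x + Finsupp.single p (1 + x (p + (r : ℤ) + 1))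

lemma zmod2_add_self (c : ZMod 2) : c + c = 0 := by
  have h : ∀ c : ZMod 2, c + c = 0 := by decide
  exact h c

lemma flipA_invol (p : ℤ) : Function.Involutive (flipA r p) := by
  intro x
  unfold flipA
  have hne : p ≠ p + (r : ℤ) + 1 := by omega
  have hval : (x + Finsupp.single p (1 + x (p + (r : ℤ) + 1))) (p + (r : ℤ) + 1)
      = x (p + (r : ℤ) + 1) := by
    rw [Finsupp.add_apply, Finsupp.single_apply, if_neg hne, add_zero]
  rw [hval, add_assoc, ← Finsupp.single_add, zmod2_add_self, Finsupp.single_zero, add_zero]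

def Ap (p : ℤ) : Equiv.Perm XX := Function.Involutive.toPerm _ (flipA_invol r p)

lemma Ap_apply (p : ℤ) (x : XX) :
    Ap r p x = x + Finsupp.single p (1 + x (p + (r : ℤ) + 1)) := rfl

lemma Ap_sq (p : ℤ) : Ap r p * Ap r p = 1 :=
  Equiv.ext fun x => flipA_invol r p x

def shiftP (k : ℤ) : Equiv.Perm XX := (Finsupp.domCongr (Equiv.addRight k)).toEquiv

lemma shiftP_apply (k : ℤ) (x : XX) (i : ℤ) : shiftP k x i = x (i - k) := rfl

lemma shiftP_add_hom (k : ℤ) (x y : XX) : shiftP k (x + y) = shiftP k x + shiftP k y := by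
  ext i
  rw [shiftP_apply, Finsupp.add_apply, Finsupp.add_apply, shiftP_apply, shiftP_apply]

lemma shiftP_zero_fun (k : ℤ) : shiftP k (0 : XX) = 0 := by
  ext i
  rw [shiftP_apply]
  rfl

lemma shiftP_single (k p : ℤ) (c : ZMod 2) :
    shiftP k (Finsupp.single p c) = Finsupp.single (p + k) c := by
  ext i
  rw [shiftP_apply, Finsupp.single_apply, Finsupp.single_apply]
  by_cases h : p = i - k
  · rw [if_pos h, if_pos (by omega)]
  · rw [if_neg h, if_neg (by omega)]

lemma shiftP_mul (j k : ℤ) : shiftP j * shiftP k = shiftP (j + k) := by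
  apply Equiv.ext
  intro x
  ext i
  rw [Equiv.Perm.mul_apply, shiftP_apply, shiftP_apply, shiftP_apply]
  congr 1
  ring

lemma shiftP_zero : shiftP 0 = 1 := by
  apply Equiv.ext
  intro x
  ext i
  rw [shiftP_apply, sub_zero]
  rfl

lemma shiftP_mul_Ap (k p : ℤ) : shiftP k * Ap r p = Ap r (p + k) * shiftP k := by
  apply Equiv.ext
  intro x
  rw [Equiv.Perm.mul_apply, Equiv.Perm.mul_apply, Ap_apply, Ap_apply, shiftP_add_hom,
    shiftP_single]
  congr 2
  rw [shiftP_apply]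
  congr 1
  ring

lemma Ap_comm (p q : ℤ) (h : (p - q).natAbs ≤ r) : Commute (Ap r p) (Ap r q) := by
  by_cases hpq : p = q
  · subst hpq; exact Commute.refl _
  · have h1 : q ≠ p + (r : ℤ) + 1 := by omega
    have h2 : p ≠ q + (r : ℤ) + 1 := by omega
    apply Equiv.ext
    intro x
    rw [Equiv.Perm.mul_apply, Equiv.Perm.mul_apply, Ap_apply, Ap_apply, Ap_apply, Ap_apply]
    have hq : (x + Finsupp.single q (1 + x (q + (r : ℤ) + 1))) (p + (r : ℤ) + 1)
        = x (p + (r : ℤ) + 1) := by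
      rw [Finsupp.add_apply, Finsupp.single_apply, if_neg h1, add_zero]
    have hp : (x + Finsupp.single p (1 + x (p + (r : ℤ) + 1))) (q + (r : ℤ) + 1)
        = x (q + (r : ℤ) + 1) := by
      rw [Finsupp.add_apply, Finsupp.single_apply, if_neg h2, add_zero]
    rw [hq, hp, add_assoc, add_assoc, add_comm (Finsupp.single q _) (Finsupp.single p _)]
    exact (add_assoc _ _ _).symm

/-! sorted products over finite sets of lamp positions -/

def sprod (S : Finset ℤ) : Equiv.Perm XX := ((S.sort (· ≤ ·)).map (Ap r)).prod

lemma sprod_empty : sprod r ∅ = 1 := by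
  unfold sprod
  rw [Finset.sort_empty]
  rfl

lemma sprod_insert (S : Finset ℤ) (k : ℤ) (hk : k ∉ S)
    (hall : ∀ p ∈ insert k S, ∀ q ∈ insert k S, Commute (Ap r p) (Ap r q)) :
    sprod r (insert k S) = sprod r S * Ap r k := by
  unfold sprod
  have hperm : ((insert k S).sort (· ≤ ·)).Perm (S.sort (· ≤ ·) ++ [k]) := by
    refine ((Finset.sort_perm_toList _ _).trans ?_)
    refine (Finset.toList_insert hk).trans ?_
    refine (List.Perm.cons k (Finset.sort_perm_toList S (· ≤ ·)).symm).trans ?_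
    exact (List.perm_append_singleton k _).symm
  have hpair : (((insert k S).sort (· ≤ ·)).map (Ap r)).Pairwise Commute := by
    rw [List.pairwise_map]
    refine List.pairwise_of_forall_mem_list ?_
    intro p hp q hq
    exact hall p ((Finset.mem_sort (α := ℤ) (· ≤ ·)).1 hp)
      q ((Finset.mem_sort (α := ℤ) (· ≤ ·)).1 hq)
  calc (((insert k S).sort (· ≤ ·)).map (Ap r)).prod
      = ((S.sort (· ≤ ·) ++ [k]).map (Ap r)).prod :=
        List.Perm.prod_eq' (hperm.map (Ap r)) hpair
    _ = ((S.sort (· ≤ ·)).map (Ap r)).prod * Ap r k := by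
        rw [List.map_append]
        rw [List.prod_append]
        simp

lemma sprod_mul_Ap (S : Finset ℤ) (k : ℤ)
    (hall : ∀ p ∈ insert k S, ∀ q ∈ insert k S, Commute (Ap r p) (Ap r q)) :
    sprod r S * Ap r k = sprod r (if k ∈ S then S.erase k else insert k S) := by
  by_cases hk : k ∈ S
  · rw [if_pos hk]
    have hS : insert k (S.erase k) = S := Finset.insert_erase hk
    have hall' : ∀ p ∈ insert k (S.erase k), ∀ q ∈ insert k (S.erase k),
        Commute (Ap r p) (Ap r q) := by
      intro p hp q hq
      rw [hS] at hp hq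
      exact hall p (by simp [hp]) q (by simp [hq])
    have h1 : sprod r S = sprod r (S.erase k) * Ap r k := by
      conv_lhs => rw [← hS]
      exact sprod_insert r (S.erase k) k (Finset.notMem_erase _ _) hall'
    rw [h1, mul_assoc, Ap_sq, mul_one]
  · rw [if_neg hk, sprod_insert r S k hk hall]

/-- toggling of supports in `Lamps` -/
lemma supp_toggle (f : Lamps) (k : ℤ) :
    (f + Finsupp.single k 1).support =
      if k ∈ f.support then f.support.erase k else insert k f.support := by
  have h01 : ∀ c : ZMod 2, c = 0 ∨ c = 1 := by decide
  ext i
  by_cases hik : i = k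
  · subst hik
    rw [Finsupp.mem_support_iff, Finsupp.add_apply, Finsupp.single_eq_same]
    by_cases hmem : i ∈ f.support
    · rw [if_pos hmem]
      have hf : f i = 1 := by
        rcases h01 (f i) with h | h
        · exact absurd (Finsupp.notMem_support_iff.2 h) (by simpa using hmem)
        · exact h
      rw [hf]
      simp only [Finset.notMem_erase, iff_false, ne_eq, not_not]
      decide
    · rw [if_neg hmem]
      have hf : f i = 0 := Finsupp.notMem_support_iff.1 hmem
      rw [hf]
      simp
  · rw [Finsupp.mem_support_iff, Finsupp.add_apply, Finsupp.single_apply,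
      if_neg (fun h => hik h.symm), add_zero]
    by_cases hmem : k ∈ f.support
    · rw [if_pos hmem, Finset.mem_erase]
      simp only [Finsupp.mem_support_iff]
      tauto
    · rw [if_neg hmem, Finset.mem_insert]
      simp only [Finsupp.mem_support_iff]
      constructor
      · intro h; exact Or.inr h
      · intro h
        rcases h with h | h
        · exact absurd h hik
        · exact h

end PermModel


/-! ### The map Θ from words to permutations, and the transfer theorem -/

section Theta

open scoped Classical

variable (r : ℕ)

lemma La_ne_Lt : La ≠ Lt := by
  intro h
  have h2 : (0 : ℤ) = 1 := congrArg (fun y : Alph ATset => y.1.2) h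
  norm_num at h2

lemma La_ne_Lt' : La ≠ Lt' := by
  intro h
  have h2 : (0 : ℤ) = (Lamplighter.t⁻¹).2 := congrArg (fun y : Alph ATset => y.1.2) h
  rw [ll_t_inv] at h2
  norm_num at h2

lemma Lt_ne_Lt' : Lt ≠ Lt' := by
  intro h
  have h2 : (1 : ℤ) = (Lamplighter.t⁻¹).2 := congrArg (fun y : Alph ATset => y.1.2) h
  rw [ll_t_inv] at h2
  norm_num at h2

lemma tinv_snd : (Lamplighter.t⁻¹).2 = -1 := by rw [ll_t_inv]

def thL (x : Alph ATset) : Equiv.Perm XX :=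
  if x = La then Ap r 0 else if x = Lt then shiftP 1 else shiftP (-1)

@[simp] lemma thL_La : thL r La = Ap r 0 := if_pos rfl
@[simp] lemma thL_Lt : thL r Lt = shiftP 1 := by
  unfold thL
  rw [if_neg (fun h => La_ne_Lt h.symm), if_pos rfl]
@[simp] lemma thL_Lt' : thL r Lt' = shiftP (-1) := by
  unfold thL
  rw [if_neg (fun h => La_ne_Lt' h.symm), if_neg (fun h => Lt_ne_Lt' h.symm)]

def Th (w : Wd) : Equiv.Perm XX := (w.map (thL r)).prod

@[simp] lemma Th_nil : Th r [] = 1 := rfl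

lemma Th_append (w₁ w₂ : Wd) : Th r (w₁ ++ w₂) = Th r w₁ * Th r w₂ := by
  unfold Th
  rw [List.map_append, List.prod_append]

lemma Th_singleton (x : Alph ATset) : Th r [x] = thL r x := by
  unfold Th
  simp

lemma Ap_inv (p : ℤ) : (Ap r p)⁻¹ = Ap r p := inv_eq_of_mul_eq_one_right (Ap_sq r p)

lemma shiftP_inv (k : ℤ) : (shiftP k)⁻¹ = shiftP (-k) :=
  inv_eq_of_mul_eq_one_right (by rw [shiftP_mul, add_neg_cancel, shiftP_zero])

lemma linv_La : linv ATset La = La := by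
  apply Subtype.ext
  show (Lamplighter.a)⁻¹ = Lamplighter.a
  exact ll_a_inv

lemma linv_Lt : linv ATset Lt = Lt' := by
  apply Subtype.ext
  rfl

lemma linv_Lt' : linv ATset Lt' = Lt := by
  apply Subtype.ext
  show (Lamplighter.t⁻¹)⁻¹ = Lamplighter.t
  rw [inv_inv]

lemma thL_linv (x : Alph ATset) : thL r (linv ATset x) = (thL r x)⁻¹ := by
  rcases letter_cases x with h | h | h <;> subst h
  · rw [linv_La, thL_La, Ap_inv]
  · rw [linv_Lt, thL_Lt', thL_Lt, shiftP_inv]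
  · rw [linv_Lt', thL_Lt, thL_Lt', shiftP_inv, neg_neg]

lemma Th_winv (w : Wd) : Th r (winv ATset w) = (Th r w)⁻¹ := by
  induction w with
  | nil => simp [winv]
  | cons x w ih =>
      have h1 : winv ATset (x :: w) = winv ATset w ++ [linv ATset x] := by simp [winv]
      have h2 : (x :: w) = [x] ++ w := rfl
      rw [h1, Th_append, ih, Th_singleton, thL_linv, h2, Th_append, Th_singleton, mul_inv_rev]

/-! drift bounds -/

lemma eval_snd_le (w : Wd) : (eval ATset w).2.natAbs ≤ w.length := by
  induction w with
  | nil => simp [eval_nil, ll_one_def]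
  | cons x w ih =>
      have h2 : (x :: w) = [x] ++ w := rfl
      rw [h2, eval_append, eval_singleton, ll_mul_snd, List.length_append]
      have hx : (x.1.2).natAbs ≤ 1 := by
        rcases letter_cases x with h | h | h <;> subst h
        · rw [La_val, show (Lamplighter.a).2 = (0 : ℤ) from rfl]
          norm_num
        · rw [Lt_val, show (Lamplighter.t).2 = (1 : ℤ) from rfl]
          norm_num
        · rw [Lt'_val, tinv_snd]
          norm_num
      simp only [List.length_cons]
      omega

lemma eval_take_window (w : Wd) (i j : ℕ) :
    ((eval ATset (w.take i)).2 - (eval ATset (w.take j)).2).natAbs ≤ w.length := by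
  -- wlog i ≤ j by symmetry of natAbs
  have key : ∀ i j : ℕ, i ≤ j →
      ((eval ATset (w.take j)).2 - (eval ATset (w.take i)).2).natAbs ≤ w.length := by
    intro i j hij
    have h1 : (w.take j).take i = w.take i := by
      rw [List.take_take]
      congr 1
      omega
    have hsplit : w.take j = w.take i ++ (w.take j).drop i := by
      conv_lhs => rw [← List.take_append_drop i (w.take j)]
      rw [h1]
    have hlen : ((w.take j).drop i).length ≤ w.length := by
      simp only [List.length_drop, List.length_take]
      omega
    have := eval_snd_le ((w.take j).drop i)
    rw [hsplit, eval_append, ll_mul_snd]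
    have habs : (eval ATset (w.take i)).2 + (eval ATset ((w.take j).drop i)).2
        - (eval ATset (w.take i)).2 = (eval ATset ((w.take j).drop i)).2 := by ring
    rw [habs]
    omega
  rcases le_total i j with hij | hij
  · have := key i j hij
    omega
  · have := key j i hij
    omega

/-! the main normal-form computation for Θ -/

lemma Th_eq_LampP : ∀ w : Wd,
    (∀ i j, ((eval ATset (w.take i)).2 - (eval ATset (w.take j)).2).natAbs ≤ r) →
    (Th r w = sprod r (eval ATset w).1.support * shiftP (eval ATset w).2 ∧
      ∀ p ∈ (eval ATset w).1.support, ∃ i, (eval ATset (w.take i)).2 = p) := by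
  intro w
  induction w using List.reverseRecOn with
  | nil =>
      intro _
      constructor
      · rw [Th_nil, eval_nil, ll_one_def]
        show (1 : Equiv.Perm XX) = sprod r (0 : Lamps).support * shiftP 0
        rw [Finsupp.support_zero, sprod_empty, shiftP_zero, one_mul]
      · intro p hp
        rw [eval_nil, ll_one_def] at hp
        simp at hp
  | append_singleton w x ih =>
      intro hwin
      -- transfer the window hypothesis to w
      have hpref : ∀ i : ℕ, eval ATset (w.take i) = eval ATset ((w ++ [x]).take (min i w.length)) := by
        intro i
        congr 1
        rcases le_total i w.length with h | h
        · rw [min_eq_left h, List.take_append_of_le_length h]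
        · rw [min_eq_right h, List.take_append_of_le_length le_rfl,
            List.take_of_length_le h, List.take_length]
      have hwin' : ∀ i j, ((eval ATset (w.take i)).2 - (eval ATset (w.take j)).2).natAbs ≤ r := by
        intro i j
        rw [hpref i, hpref j]
        exact hwin _ _
      obtain ⟨ih1, ih2⟩ := ih hwin'
      -- indices for w give indices for w ++ [x]
      have hidx : ∀ p, (∃ i, (eval ATset (w.take i)).2 = p) →
          (∃ i, (eval ATset ((w ++ [x]).take i)).2 = p) := by
        intro p ⟨i, hi⟩
        exact ⟨min i w.length, by rw [← hpref i]; exact hi⟩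
      have hevw : ∀ i : ℕ, eval ATset ((w ++ [x]).take w.length) = eval ATset w := by
        intro i
        rw [List.take_append_of_le_length le_rfl, List.take_length]
      rw [eval_append, eval_singleton]
      rcases letter_cases x with h | h | h <;> subst h
      · -- the letter a
        rw [La_val, ll_mul_a, Th_append, Th_singleton, thL_La, ih1]
        set f := (eval ATset w).1 with hf
        set k := (eval ATset w).2 with hk
        have hall : ∀ p ∈ insert k f.support, ∀ q ∈ insert k f.support,
            Commute (Ap r p) (Ap r q) := by
          have hdrift : ∀ p ∈ insert k f.support,
              ∃ i, (eval ATset ((w ++ [La]).take i)).2 = p := by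
            intro p hp
            rcases Finset.mem_insert.1 hp with hp | hp
            · refine ⟨w.length, ?_⟩
              rw [hevw w.length, hp]
            · exact hidx p (ih2 p hp)
          intro p hp q hq
          obtain ⟨i, hi⟩ := hdrift p hp
          obtain ⟨j, hj⟩ := hdrift q hq
          refine Ap_comm r p q ?_
          rw [← hi, ← hj]
          exact hwin i j
        constructor
        · show _ = sprod r (f + Finsupp.single k 1).support * shiftP (mkLL (f + Finsupp.single k 1) k).2
          rw [mkLL_snd, supp_toggle, mul_assoc, shiftP_mul_Ap, ← mul_assoc, zero_add,
            sprod_mul_Ap r f.support k hall]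
        · intro p hp
          rw [mkLL_fst, supp_toggle] at hp
          by_cases hkmem : k ∈ f.support
          · rw [if_pos hkmem] at hp
            exact hidx p (ih2 p (Finset.mem_of_mem_erase hp))
          · rw [if_neg hkmem] at hp
            rcases Finset.mem_insert.1 hp with hp | hp
            · refine ⟨w.length, ?_⟩
              rw [hevw w.length, hp]
            · exact hidx p (ih2 p hp)
      · -- the letter t
        rw [Lt_val, ll_mul_t, Th_append, Th_singleton, thL_Lt, ih1]
        constructor
        · rw [mkLL_fst, mkLL_snd, mul_assoc, shiftP_mul]
        · intro p hp
          rw [mkLL_fst] at hp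
          exact hidx p (ih2 p hp)
      · -- the letter t⁻¹
        rw [Lt'_val, ll_mul_tinv, Th_append, Th_singleton, thL_Lt', ih1]
        constructor
        · rw [mkLL_fst, mkLL_snd, mul_assoc, shiftP_mul, sub_eq_add_neg]
        · intro p hp
          rw [mkLL_fst] at hp
          exact hidx p (ih2 p hp)

/-- The transfer theorem: short relations of the lamplighter hold in the permutation model. -/
lemma transfer (w : Wd) (hlen : w.length ≤ r) (hev : eval ATset w = 1) : Th r w = 1 := by
  have hwin : ∀ i j, ((eval ATset (w.take i)).2 - (eval ATset (w.take j)).2).natAbs ≤ r :=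
    fun i j => le_trans (eval_take_window w i j) hlen
  obtain ⟨h1, _⟩ := Th_eq_LampP r w hwin
  rw [h1, hev, ll_one_def]
  show sprod r (0 : Lamps).support * shiftP 0 = 1
  rw [Finsupp.support_zero, sprod_empty, shiftP_zero, one_mul]

end Theta


/-! ### The commutator word c_m -/

section Cword

def cword (m : ℕ) : Wd :=
  [La] ++ List.replicate m Lt ++ [La] ++ List.replicate m Lt' ++
  [La] ++ List.replicate m Lt ++ [La] ++ List.replicate m Lt'

lemma cword_length (m : ℕ) : (cword m).length = 4 * m + 4 := by
  unfold cword
  simp only [List.length_append, List.length_cons, List.length_nil, List.length_replicate]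
  omega

lemma lamps_add_self (u : Lamps) : u + u = 0 := by
  ext i
  rw [Finsupp.add_apply, zmod2_add_self]
  rfl

lemma eval_cword (m : ℕ) : eval ATset (cword m) = 1 := by
  unfold cword
  rw [eval_append, eval_append, eval_append, eval_append, eval_append, eval_append,
    eval_append, eval_singleton, La_val, eval_replicate_Lt, eval_replicate_Lt']
  have ha1 : (Lamplighter.a).1 = Finsupp.single 0 1 := rfl
  have ha2 : (Lamplighter.a).2 = 0 := rfl
  simp only [ll_mul_zm, ll_mul_a, mkLL_fst, mkLL_snd, ha1, ha2]
  rw [ll_one_def]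
  refine LLext ?_ ?_
  · show Finsupp.single (0 : ℤ) (1 : ZMod 2) + Finsupp.single (0 + (m : ℤ)) 1
        + Finsupp.single (0 + (m : ℤ) + -(m : ℤ)) 1
        + Finsupp.single (0 + (m : ℤ) + -(m : ℤ) + (m : ℤ)) 1 = (0 : Lamps)
    have e1 : (0 : ℤ) + (m : ℤ) = (m : ℤ) := by ring
    have e2 : (m : ℤ) + -(m : ℤ) = 0 := by ring
    rw [e1, e2, zero_add]
    have hcomm : Finsupp.single (0:ℤ) (1 : ZMod 2) + Finsupp.single (m:ℤ) 1 +
        Finsupp.single (0:ℤ) 1 + Finsupp.single (m:ℤ) 1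
        = (Finsupp.single (0:ℤ) 1 + Finsupp.single (0:ℤ) 1) +
          (Finsupp.single (m:ℤ) 1 + Finsupp.single (m:ℤ) 1) := by abel
    rw [hcomm, lamps_add_self, lamps_add_self, add_zero]
  · rw [mkLL_snd]
    show (0 : ℤ) + (m : ℤ) + -(m : ℤ) + (m : ℤ) + -(m : ℤ) = 0
    ring

variable (r : ℕ)

open scoped Classical

lemma Th_replicate_Lt (n : ℕ) : Th r (List.replicate n Lt) = shiftP (n : ℤ) := by
  induction n with
  | zero => rw [List.replicate_zero, Th_nil, Nat.cast_zero, shiftP_zero]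
  | succ n ih =>
      rw [List.replicate_succ', Th_append, ih, Th_singleton, thL_Lt, shiftP_mul]
      have hc : ((n : ℤ) + 1) = (((n + 1 : ℕ)) : ℤ) := by push_cast; ring
      rw [hc]

lemma Th_replicate_Lt' (n : ℕ) : Th r (List.replicate n Lt') = shiftP (-(n : ℤ)) := by
  induction n with
  | zero => rw [List.replicate_zero, Th_nil, Nat.cast_zero, neg_zero, shiftP_zero]
  | succ n ih =>
      rw [List.replicate_succ', Th_append, ih, Th_singleton, thL_Lt', shiftP_mul]
      have hc : (-(n : ℤ) + -1) = -(((n + 1 : ℕ)) : ℤ) := by push_cast; ring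
      rw [hc]

lemma zmod2_one_ne_zero : (1 : ZMod 2) ≠ 0 := by decide

lemma Th_cword_ne_one : Th r (cword (r + 1)) ≠ 1 := by
  intro hcontra
  set m : ℤ := ((r : ℕ) : ℤ) + 1 with hm
  have hmcast : (((r + 1 : ℕ) : ℤ)) = m := by push_cast; ring
  have happ : Th r (cword (r + 1)) (0 : XX) = Finsupp.single (0 : ℤ) (1 : ZMod 2) := by
    unfold cword
    rw [Th_append, Th_append, Th_append, Th_append, Th_append, Th_append, Th_append,
      Th_singleton, thL_La, Th_replicate_Lt, Th_replicate_Lt', hmcast]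
    simp only [Equiv.Perm.mul_apply]
    -- innermost first
    rw [shiftP_zero_fun]
    have step2 : Ap r 0 (0 : XX) = Finsupp.single (0:ℤ) (1 : ZMod 2) := by
      rw [Ap_apply]
      rw [show ((0 : XX) (0 + (r:ℤ) + 1)) = 0 from rfl, add_zero, zero_add]
    rw [step2]
    have step3 : shiftP m (Finsupp.single (0:ℤ) (1 : ZMod 2)) = Finsupp.single m 1 := by
      rw [shiftP_single, zero_add]
    rw [step3]
    have step4 : Ap r 0 (Finsupp.single m (1 : ZMod 2)) = Finsupp.single m 1 := by
      rw [Ap_apply]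
      have hrm : (0 : ℤ) + (r : ℤ) + 1 = m := by rw [hm]; ring
      rw [hrm, Finsupp.single_eq_same]
      rw [show (1 : ZMod 2) + 1 = 0 from zmod2_add_self 1, Finsupp.single_zero, add_zero]
    rw [step4]
    have step5 : shiftP (-m) (Finsupp.single m (1 : ZMod 2)) = Finsupp.single 0 1 := by
      rw [shiftP_single, add_neg_cancel]
    rw [step5]
    have step6 : Ap r 0 (Finsupp.single (0:ℤ) (1 : ZMod 2)) = 0 := by
      rw [Ap_apply]
      have hne : (0 : ℤ) ≠ 0 + (r : ℤ) + 1 := by omega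
      rw [Finsupp.single_apply, if_neg hne, add_zero, lamps_add_self]
    rw [step6, shiftP_zero_fun, step2]
  rw [hcontra] at happ
  have h1 : (0 : XX) = Finsupp.single (0 : ℤ) (1 : ZMod 2) := happ
  have h2 := congrArg (fun u : XX => u 0) h1
  simp only [Finsupp.coe_zero, Pi.zero_apply, Finsupp.single_eq_same] at h2
  exact zmod2_one_ne_zero h2.symm

end Cword


/-! ### wordLength toolkit for the lamplighter -/

lemma ll_realize (g : Lamplighter) :
    ∃ w : Wd, eval ATset w = g ∧ w.length = wordLength ATset g :=
  exists_word_of _ (exists_word_eval g)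

lemma ll_wl_one : wordLength ATset (1 : Lamplighter) = 0 :=
  Nat.le_antisymm (wordLength_le _ (by rfl : eval ATset [] = 1)) (Nat.zero_le _)

lemma ll_wl_mul_le (g h : Lamplighter) :
    wordLength ATset (g * h) ≤ wordLength ATset g + wordLength ATset h := by
  obtain ⟨w₁, hw₁, hl₁⟩ := ll_realize g
  obtain ⟨w₂, hw₂, hl₂⟩ := ll_realize h
  have he : eval ATset (w₁ ++ w₂) = g * h := by rw [eval_append, hw₁, hw₂]
  calc wordLength ATset (g * h) ≤ (w₁ ++ w₂).length := wordLength_le _ he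
    _ = _ := by rw [List.length_append, hl₁, hl₂]

lemma ll_wl_inv_le (g : Lamplighter) : wordLength ATset g⁻¹ ≤ wordLength ATset g := by
  obtain ⟨w, hw, hl⟩ := ll_realize g
  have he : eval ATset (winv ATset w) = g⁻¹ := by rw [eval_winv, hw]
  calc wordLength ATset g⁻¹ ≤ (winv ATset w).length := wordLength_le _ he
    _ = _ := by rw [winv_length, hl]

lemma ll_wl_eval_le (w : Wd) : wordLength ATset (eval ATset w) ≤ w.length :=
  wordLength_le _ rfl


/-! ### Representation-level lemmas -/

section RepLevel

open scoped Classical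

variable (L : Language (Alph ATset)) (ψ : Wd → Lamplighter)

def Rel (s : Lamplighter) : Set (Wd × Wd) :=
  {p : Wd × Wd | p.1 ∈ L ∧ p.2 ∈ L ∧ ψ p.2 = ψ p.1 * s}

variable {σ : Type} [Fintype σ]

lemma conv_mem_accepts (M : DFA (Option (Alph ATset) × Option (Alph ATset)) σ) (s : Lamplighter)
    (hM : M.accepts = {w | ∃ p ∈ Rel L ψ s, w = conv p.1 p.2})
    {u v : Wd} (h : (u, v) ∈ Rel L ψ s) : conv u v ∈ M.accepts := by
  rw [hM]
  exact ⟨(u, v), h, rfl⟩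

lemma len_le_right (hinj : Set.InjOn ψ L)
    (M : DFA (Option (Alph ATset) × Option (Alph ATset)) σ) (s : Lamplighter)
    (hM : M.accepts = {w | ∃ p ∈ Rel L ψ s, w = conv p.1 p.2})
    {u v : Wd} (huv : (u, v) ∈ Rel L ψ s) :
    v.length ≤ u.length + Fintype.card σ := by
  by_contra hcon
  push_neg at hcon
  have hle : u.length ≤ v.length := by omega
  have hconv := conv_pad_right u v hle
  set pad : Alph ATset → (Option (Alph ATset) × Option (Alph ATset)) :=
    fun b => ((none : Option (Alph ATset)), some b) with hpad
  set w₂ : List (Option (Alph ATset) × Option (Alph ATset)) := (v.drop u.length).map pad with hw₂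
  have hw₂len : Fintype.card σ + 1 ≤ w₂.length := by
    rw [hw₂, List.length_map, List.length_drop]
    omega
  have hacc : conv u (v.take u.length) ++ w₂ ∈ M.accepts := by
    rw [← hconv]
    exact conv_mem_accepts L ψ M s hM huv
  obtain ⟨w₂', hlt, hsub, hacc'⟩ := dfa_cut_suffix M _ _ hw₂len hacc
  rw [hM] at hacc'
  obtain ⟨p, hp, hpc⟩ := hacc'
  have hshape : ∀ c ∈ w₂', c.1 = (none : Option (Alph ATset)) := by
    intro c hc
    obtain ⟨b, _, hb⟩ := List.mem_map.1 (hsub c hc)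
    rw [← hb]
  have h1 : p.1 = u := by
    calc p.1 = fstD (conv p.1 p.2) := (fstD_conv _ _).symm
      _ = fstD (conv u (v.take u.length) ++ w₂') := by rw [← hpc]
      _ = fstD (conv u (v.take u.length)) ++ fstD w₂' := fstD_append _ _
      _ = u ++ [] := by rw [fstD_conv, fstD_all_none _ hshape]
      _ = u := by simp
  have h2 : p.2 = v := by
    apply hinj hp.2.1 huv.2.1
    rw [hp.2.2, huv.2.2, h1]
  have hlen : p.2.length < v.length := by
    have hcalc : p.2 = v.take u.length ++ sndD w₂' := by
      calc p.2 = sndD (conv p.1 p.2) := (sndD_conv _ _).symm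
        _ = sndD (conv u (v.take u.length) ++ w₂') := by rw [← hpc]
        _ = sndD (conv u (v.take u.length)) ++ sndD w₂' := sndD_append _ _
        _ = v.take u.length ++ sndD w₂' := by rw [sndD_conv]
    rw [hcalc, List.length_append, List.length_take]
    have hs1 : (sndD w₂').length ≤ w₂'.length := sndD_length_le _
    have hs2 : w₂.length = v.length - u.length := by
      rw [hw₂, List.length_map, List.length_drop]
    omega
  rw [h2] at hlen
  omega

lemma len_le_left (hinj : Set.InjOn ψ L)
    (M : DFA (Option (Alph ATset) × Option (Alph ATset)) σ) (s : Lamplighter)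
    (hM : M.accepts = {w | ∃ p ∈ Rel L ψ s, w = conv p.1 p.2})
    {u v : Wd} (huv : (u, v) ∈ Rel L ψ s) :
    u.length ≤ v.length + Fintype.card σ := by
  by_contra hcon
  push_neg at hcon
  have hle : v.length ≤ u.length := by omega
  have hconv := conv_pad_left u v hle
  set pad : Alph ATset → (Option (Alph ATset) × Option (Alph ATset)) :=
    fun a => (some a, (none : Option (Alph ATset))) with hpad
  set w₂ : List (Option (Alph ATset) × Option (Alph ATset)) := (u.drop v.length).map pad with hw₂
  have hw₂len : Fintype.card σ + 1 ≤ w₂.length := by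
    rw [hw₂, List.length_map, List.length_drop]
    omega
  have hacc : conv (u.take v.length) v ++ w₂ ∈ M.accepts := by
    rw [← hconv]
    exact conv_mem_accepts L ψ M s hM huv
  obtain ⟨w₂', hlt, hsub, hacc'⟩ := dfa_cut_suffix M _ _ hw₂len hacc
  rw [hM] at hacc'
  obtain ⟨p, hp, hpc⟩ := hacc'
  have hshape : ∀ c ∈ w₂', c.2 = (none : Option (Alph ATset)) := by
    intro c hc
    obtain ⟨b, _, hb⟩ := List.mem_map.1 (hsub c hc)
    rw [← hb]
  have h1 : p.2 = v := by
    calc p.2 = sndD (conv p.1 p.2) := (sndD_conv _ _).symm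
      _ = sndD (conv (u.take v.length) v ++ w₂') := by rw [← hpc]
      _ = sndD (conv (u.take v.length) v) ++ sndD w₂' := sndD_append _ _
      _ = v ++ [] := by rw [sndD_conv, sndD_all_none _ hshape]
      _ = v := by simp
  have h2 : p.1 = u := by
    apply hinj hp.1 huv.1
    have h3 := hp.2.2
    rw [h1, huv.2.2] at h3
    exact mul_right_cancel h3.symm
  have hlen : p.1.length < u.length := by
    have hcalc : p.1 = u.take v.length ++ fstD w₂' := by
      calc p.1 = fstD (conv p.1 p.2) := (fstD_conv _ _).symm
        _ = fstD (conv (u.take v.length) v ++ w₂') := by rw [← hpc]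
        _ = fstD (conv (u.take v.length) v) ++ fstD w₂' := fstD_append _ _
        _ = u.take v.length ++ fstD w₂' := by rw [fstD_conv]
    rw [hcalc, List.length_append, List.length_take]
    have hs1 : (fstD w₂').length ≤ w₂'.length := fstD_length_le _
    have hs2 : w₂.length = u.length - v.length := by
      rw [hw₂, List.length_map, List.length_drop]
    omega
  rw [h2] at hlen
  omega

/-- The fellow-traveling rail bound coming from the automaton of the relation `R_s`. -/
lemma rail_bound (s : Lamplighter) (hs : wordLength ATset s ≤ 1)
    (M : DFA (Option (Alph ATset) × Option (Alph ATset)) σ)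
    (hM : M.accepts = {w | ∃ p ∈ Rel L ψ s, w = conv p.1 p.2})
    (Φ ncap : ℕ)
    (hdist : ∀ w, w ∈ L → w.length ≤ ncap →
      wordLength ATset ((eval ATset w)⁻¹ * ψ w) ≤ Φ)
    {u v : Wd} (huv : (u, v) ∈ Rel L ψ s)
    (hu : u.length + Fintype.card σ ≤ ncap) (hv : v.length + Fintype.card σ ≤ ncap)
    (i : ℕ) :
    wordLength ATset ((eval ATset (u.take i))⁻¹ * eval ATset (v.take i)) ≤
      2 * Φ + 2 * Fintype.card σ + 1 := by
  set C := conv u v with hC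
  by_cases hi : i ≤ C.length
  · have hacc : C ∈ M.accepts := conv_mem_accepts L ψ M s hM huv
    rw [DFA.mem_accepts] at hacc
    unfold DFA.eval at hacc
    have hsplit : C = C.take i ++ C.drop i := (List.take_append_drop i C).symm
    rw [hsplit, DFA.evalFrom_of_append] at hacc
    obtain ⟨D, hDlen, hDacc⟩ := dfa_short M _ _ hacc
    have haccW : C.take i ++ D ∈ M.accepts := by
      rw [DFA.mem_accepts]
      unfold DFA.eval
      rw [DFA.evalFrom_of_append]
      exact hDacc
    rw [hM] at haccW
    obtain ⟨p, hp, hpc⟩ := haccW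
    have hctake : C.take i = conv (u.take i) (v.take i) := conv_take u v i
    have hzz : p.1 = u.take i ++ fstD D := by
      calc p.1 = fstD (conv p.1 p.2) := (fstD_conv _ _).symm
        _ = fstD (C.take i ++ D) := by rw [← hpc]
        _ = fstD (C.take i) ++ fstD D := fstD_append _ _
        _ = u.take i ++ fstD D := by rw [hctake, fstD_conv]
    have hzz' : p.2 = v.take i ++ sndD D := by
      calc p.2 = sndD (conv p.1 p.2) := (sndD_conv _ _).symm
        _ = sndD (C.take i ++ D) := by rw [← hpc]
        _ = sndD (C.take i) ++ sndD D := sndD_append _ _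
        _ = v.take i ++ sndD D := by rw [hctake, sndD_conv]
    have hzlen : p.1.length ≤ ncap := by
      rw [hzz, List.length_append, List.length_take]
      have := fstD_length_le D
      omega
    have hzlen' : p.2.length ≤ ncap := by
      rw [hzz', List.length_append, List.length_take]
      have := sndD_length_le D
      omega
    have hd1 : wordLength ATset ((eval ATset p.1)⁻¹ * ψ p.1) ≤ Φ := hdist p.1 hp.1 hzlen
    have hd2 : wordLength ATset ((eval ATset p.2)⁻¹ * ψ p.2) ≤ Φ := hdist p.2 hp.2.1 hzlen'
    have hψzz : ψ p.2 = ψ p.1 * s := hp.2.2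
    have hev1 : eval ATset p.1 = eval ATset (u.take i) * eval ATset (fstD D) := by
      rw [hzz, eval_append]
    have hev2 : eval ATset p.2 = eval ATset (v.take i) * eval ATset (sndD D) := by
      rw [hzz', eval_append]
    have halg : (eval ATset (u.take i))⁻¹ * eval ATset (v.take i) =
        eval ATset (fstD D) *
          (((eval ATset p.1)⁻¹ * ψ p.1) * ((ψ p.1)⁻¹ * ψ p.2) *
            ((eval ATset p.2)⁻¹ * ψ p.2)⁻¹) *
          (eval ATset (sndD D))⁻¹ := by
      rw [hev1, hev2]
      group
    have hmids : wordLength ATset ((ψ p.1)⁻¹ * ψ p.2) ≤ 1 := by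
      rw [hψzz, inv_mul_cancel_left]
      exact hs
    rw [halg]
    have b1 : wordLength ATset (eval ATset (fstD D)) ≤ Fintype.card σ :=
      le_trans (ll_wl_eval_le _) (le_trans (fstD_length_le _) hDlen)
    have b2 : wordLength ATset ((eval ATset (sndD D))⁻¹) ≤ Fintype.card σ :=
      le_trans (ll_wl_inv_le _) (le_trans (ll_wl_eval_le _)
        (le_trans (sndD_length_le _) hDlen))
    have b3 : wordLength ATset (((eval ATset p.2)⁻¹ * ψ p.2)⁻¹) ≤ Φ :=
      le_trans (ll_wl_inv_le _) hd2
    have hmid : wordLength ATset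
        (((eval ATset p.1)⁻¹ * ψ p.1) * ((ψ p.1)⁻¹ * ψ p.2) *
          ((eval ATset p.2)⁻¹ * ψ p.2)⁻¹) ≤
        Φ + 1 + Φ := by
      have t1 := ll_wl_mul_le (((eval ATset p.1)⁻¹ * ψ p.1) * ((ψ p.1)⁻¹ * ψ p.2))
        (((eval ATset p.2)⁻¹ * ψ p.2)⁻¹)
      have t2 := ll_wl_mul_le ((eval ATset p.1)⁻¹ * ψ p.1) ((ψ p.1)⁻¹ * ψ p.2)
      omega
    have t3 := ll_wl_mul_le (eval ATset (fstD D) *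
      (((eval ATset p.1)⁻¹ * ψ p.1) * ((ψ p.1)⁻¹ * ψ p.2) *
        ((eval ATset p.2)⁻¹ * ψ p.2)⁻¹))
      ((eval ATset (sndD D))⁻¹)
    have t4 := ll_wl_mul_le (eval ATset (fstD D))
      ((((eval ATset p.1)⁻¹ * ψ p.1) * ((ψ p.1)⁻¹ * ψ p.2) *
        ((eval ATset p.2)⁻¹ * ψ p.2)⁻¹))
    omega
  · push_neg at hi
    have hCu : u.length ≤ C.length := by rw [hC, conv_length]; omega
    have hCv : v.length ≤ C.length := by rw [hC, conv_length]; omega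
    have htu : u.take i = u := List.take_of_length_le (by omega)
    have htv : v.take i = v := List.take_of_length_le (by omega)
    rw [htu, htv]
    have hψuv : ψ v = ψ u * s := huv.2.2
    have hd1 : wordLength ATset ((eval ATset u)⁻¹ * ψ u) ≤ Φ := hdist u huv.1 (by omega)
    have hd2 : wordLength ATset ((eval ATset v)⁻¹ * ψ v) ≤ Φ := hdist v huv.2.1 (by omega)
    have halg : (eval ATset u)⁻¹ * eval ATset v =
        ((eval ATset u)⁻¹ * ψ u) * ((ψ u)⁻¹ * ψ v) * ((eval ATset v)⁻¹ * ψ v)⁻¹ := by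
      group
    have hmids : wordLength ATset ((ψ u)⁻¹ * ψ v) ≤ 1 := by
      rw [hψuv, inv_mul_cancel_left]
      exact hs
    rw [halg]
    have b3 : wordLength ATset (((eval ATset v)⁻¹ * ψ v)⁻¹) ≤ Φ :=
      le_trans (ll_wl_inv_le _) hd2
    have t1 := ll_wl_mul_le (((eval ATset u)⁻¹ * ψ u) * ((ψ u)⁻¹ * ψ v))
      (((eval ATset v)⁻¹ * ψ v)⁻¹)
    have t2 := ll_wl_mul_le ((eval ATset u)⁻¹ * ψ u) ((ψ u)⁻¹ * ψ v)
    omega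

end RepLevel



/-! ### The ladder lemma and the chain step -/

section Ladder

open scoped Classical

lemma optList_len (o : Option (Alph ATset)) : o.toList.length ≤ 1 := by
  cases o <;> simp

lemma ladder (r E : ℕ) (hcell : 2 * E + 2 ≤ r)
    (P Q : Wd) (hPQ : eval ATset P = eval ATset Q)
    (hFT : ∀ i, wordLength ATset ((eval ATset (P.take i))⁻¹ * eval ATset (Q.take i)) ≤ E) :
    Th r P = Th r Q := by
  set d : ℕ → Lamplighter := fun i => (eval ATset (P.take i))⁻¹ * eval ATset (Q.take i) with hd
  have hcex : ∀ i, ∃ c : Wd, eval ATset c = d i ∧ c.length = wordLength ATset (d i) :=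
    fun i => ll_realize (d i)
  choose c hce hcl using hcex
  have hclen : ∀ i, (c i).length ≤ E := fun i => le_trans (le_of_eq (hcl i)) (hFT i)
  have main : ∀ i, Th r (P.take i) * Th r (c i) = Th r (Q.take i) := by
    intro i
    induction i with
    | zero =>
        have hd0 : d 0 = 1 := by
          rw [hd]
          simp only [List.take_zero, eval_nil]
          group
        have hlen0 : (c 0).length = 0 := by rw [hcl 0, hd0, ll_wl_one]
        have hc0 : c 0 = [] := List.length_eq_zero_iff.mp hlen0
        simp [hc0]
    | succ i ih =>
        set pL : Wd := (P[i]?).toList with hpL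
        set qL : Wd := (Q[i]?).toList with hqL
        have hPt : P.take (i+1) = P.take i ++ pL := List.take_succ
        have hQt : Q.take (i+1) = Q.take i ++ qL := List.take_succ
        set W : Wd := pL ++ c (i+1) ++ winv ATset qL ++ winv ATset (c i) with hW
        have hWev : eval ATset W = 1 := by
          rw [hW, eval_append, eval_append, eval_append, eval_winv, eval_winv, hce, hce, hd]
          simp only []
          rw [hPt, hQt, eval_append, eval_append]
          group
        have hWlen : W.length ≤ r := by
          rw [hW]
          simp only [List.length_append, winv_length]
          have l1 : pL.length ≤ 1 := by rw [hpL]; exact optList_len _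
          have l2 : qL.length ≤ 1 := by rw [hqL]; exact optList_len _
          have l3 := hclen i
          have l4 := hclen (i+1)
          omega
        have hWth : Th r W = 1 := transfer r W hWlen hWev
        rw [hW, Th_append, Th_append, Th_append, Th_winv, Th_winv] at hWth
        have h3 : Th r pL * Th r (c (i+1)) * (Th r qL)⁻¹ = Th r (c i) :=
          mul_inv_eq_one.mp hWth
        have h4 : Th r pL * Th r (c (i+1)) = Th r (c i) * Th r qL :=
          mul_inv_eq_iff_eq_mul.mp h3
        rw [hPt, hQt, Th_append, Th_append, mul_assoc, h4, ← mul_assoc, ih]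
  set I := max P.length Q.length with hI
  have hPI : P.take I = P := List.take_of_length_le (le_max_left _ _)
  have hQI : Q.take I = Q := List.take_of_length_le (le_max_right _ _)
  have hdI : d I = 1 := by rw [hd]; simp only []; rw [hPI, hQI, hPQ]; group
  have hlenI : (c I).length = 0 := by rw [hcl I, hdI, ll_wl_one]
  have hcI : c I = [] := List.length_eq_zero_iff.mp hlenI
  have hmain := main I
  rw [hPI, hQI, hcI, Th_nil, mul_one] at hmain
  exact hmain

end Ladder

section Chain

open scoped Classical

variable (L : Language (Alph ATset)) (ψ : Wd → Lamplighter)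
variable (hbij : Set.BijOn ψ L Set.univ)

noncomputable def rho (g : Lamplighter) : Wd := (hbij.2.2 (Set.mem_univ g)).choose

lemma rho_mem (g : Lamplighter) : rho L ψ hbij g ∈ L :=
  (hbij.2.2 (Set.mem_univ g)).choose_spec.1

lemma psi_rho (g : Lamplighter) : ψ (rho L ψ hbij g) = g :=
  (hbij.2.2 (Set.mem_univ g)).choose_spec.2

noncomputable def rlz (g : Lamplighter) : Wd := (ll_realize g).choose

lemma rlz_eval (g : Lamplighter) : eval ATset (rlz g) = g := (ll_realize g).choose_spec.1

lemma rlz_len (g : Lamplighter) : (rlz g).length = wordLength ATset g :=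
  (ll_realize g).choose_spec.2

noncomputable def uhat (g : Lamplighter) : Wd :=
  rho L ψ hbij g ++ rlz ((eval ATset (rho L ψ hbij g))⁻¹ * g)

lemma uhat_eval (g : Lamplighter) : eval ATset (uhat L ψ hbij g) = g := by
  rw [uhat, eval_append, rlz_eval, mul_inv_cancel_left]

variable {σ : Type} [Fintype σ]

lemma pair_rel (s : Lamplighter) (g : Lamplighter) :
    (rho L ψ hbij g, rho L ψ hbij (g * s)) ∈ Rel L ψ s :=
  ⟨rho_mem L ψ hbij g, rho_mem L ψ hbij (g * s), by
    show ψ (rho L ψ hbij (g * s)) = ψ (rho L ψ hbij g) * s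
    rw [psi_rho L ψ hbij (g * s), psi_rho L ψ hbij g]⟩

/-- the forward step of the chain -/
lemma step_forward (s : Lamplighter) (hs : wordLength ATset s ≤ 1)
    (M : DFA (Option (Alph ATset) × Option (Alph ATset)) σ)
    (hM : M.accepts = {w | ∃ p ∈ Rel L ψ s, w = conv p.1 p.2})
    (Φ ncap r : ℕ)
    (hdist : ∀ w, w ∈ L → w.length ≤ ncap →
      wordLength ATset ((eval ATset w)⁻¹ * ψ w) ≤ Φ)
    (g : Lamplighter)
    (hgl : (rho L ψ hbij g).length + Fintype.card σ ≤ ncap)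
    (hgl2 : (rho L ψ hbij (g * s)).length + Fintype.card σ ≤ ncap)
    (hr : 2 * (4 * Φ + 2 * Fintype.card σ + 3) + 2 ≤ r)
    (sL : Alph ATset) (hsL : sL.1 = s) :
    Th r (uhat L ψ hbij g) * thL r sL = Th r (uhat L ψ hbij (g * s)) := by
  set x : Wd := rho L ψ hbij g with hx
  set x' : Wd := rho L ψ hbij (g * s) with hx'
  set T1 : Wd := rlz ((eval ATset x)⁻¹ * g) ++ [sL] with hT1
  set T2 : Wd := rlz ((eval ATset x')⁻¹ * (g * s)) with hT2
  set P : Wd := x ++ T1 with hP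
  set Q : Wd := x' ++ T2 with hQ
  have hPdef : P = uhat L ψ hbij g ++ [sL] := by
    rw [hP, hT1, uhat, List.append_assoc]
  have hQdef : Q = uhat L ψ hbij (g * s) := by rw [hQ, hT2, uhat]
  have hpsix : ψ x = g := psi_rho L ψ hbij g
  have hpsix' : ψ x' = g * s := psi_rho L ψ hbij (g * s)
  have hT1len : T1.length ≤ Φ + 1 := by
    rw [hT1, List.length_append, List.length_cons, List.length_nil, rlz_len]
    have hh := hdist x (rho_mem L ψ hbij g) (by omega)
    rw [hpsix] at hh
    omega
  have hT2len : T2.length ≤ Φ := by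
    rw [hT2, rlz_len]
    have hh := hdist x' (rho_mem L ψ hbij (g * s)) (by omega)
    rw [hpsix'] at hh
    omega
  have hPQ : eval ATset P = eval ATset Q := by
    rw [hPdef, hQdef, eval_append, uhat_eval, uhat_eval, eval_singleton, hsL]
  have hrail := rail_bound L ψ s hs M hM Φ ncap hdist
    (pair_rel L ψ hbij s g) (by rw [← hx]; omega) (by rw [← hx']; omega)
  have hFT : ∀ i, wordLength ATset
      ((eval ATset (P.take i))⁻¹ * eval ATset (Q.take i)) ≤ 4 * Φ + 2 * Fintype.card σ + 3 := by
    intro i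
    have hPt : P.take i = x.take i ++ T1.take (i - x.length) := by
      rw [hP, List.take_append]
    have hQt : Q.take i = x'.take i ++ T2.take (i - x'.length) := by
      rw [hQ, List.take_append]
    have halg : (eval ATset (P.take i))⁻¹ * eval ATset (Q.take i) =
        (eval ATset (T1.take (i - x.length)))⁻¹ *
          ((eval ATset (x.take i))⁻¹ * eval ATset (x'.take i)) *
          eval ATset (T2.take (i - x'.length)) := by
      rw [hPt, hQt, eval_append, eval_append]
      group
    rw [halg]
    have b1 : wordLength ATset ((eval ATset (T1.take (i - x.length)))⁻¹) ≤ Φ + 1 := by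
      refine le_trans (ll_wl_inv_le _) (le_trans (ll_wl_eval_le _) ?_)
      have := List.length_take (i := i - x.length) (l := T1)
      omega
    have b2 : wordLength ATset (eval ATset (T2.take (i - x'.length))) ≤ Φ := by
      refine le_trans (ll_wl_eval_le _) ?_
      have := List.length_take (i := i - x'.length) (l := T2)
      omega
    have b3 := hrail i
    rw [← hx, ← hx'] at b3
    have t1 := ll_wl_mul_le ((eval ATset (T1.take (i - x.length)))⁻¹ *
      ((eval ATset (x.take i))⁻¹ * eval ATset (x'.take i)))
      (eval ATset (T2.take (i - x'.length)))
    have t2 := ll_wl_mul_le ((eval ATset (T1.take (i - x.length)))⁻¹)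
      ((eval ATset (x.take i))⁻¹ * eval ATset (x'.take i))
    omega
  have hlad := ladder r (4 * Φ + 2 * Fintype.card σ + 3) hr P Q hPQ hFT
  rw [hPdef, hQdef, Th_append, Th_singleton] at hlad
  exact hlad

end Chain



section Final

open scoped Classical

variable (L : Language (Alph ATset)) (ψ : Wd → Lamplighter)
variable (hbij : Set.BijOn ψ L Set.univ)

lemma wl_a_le : wordLength ATset Lamplighter.a ≤ 1 := by
  have h : eval ATset [La] = Lamplighter.a := by rw [eval_singleton, La_val]
  exact wordLength_le _ h

lemma wl_t_le : wordLength ATset Lamplighter.t ≤ 1 := by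
  have h : eval ATset [Lt] = Lamplighter.t := by rw [eval_singleton, Lt_val]
  exact wordLength_le _ h

variable {σ : Type} [Fintype σ]

/-- the backward step of the chain (for the letter t⁻¹) -/
lemma step_tinv (M : DFA (Option (Alph ATset) × Option (Alph ATset)) σ)
    (hM : M.accepts = {w | ∃ p ∈ Rel L ψ Lamplighter.t, w = conv p.1 p.2})
    (Φ ncap r : ℕ)
    (hdist : ∀ w, w ∈ L → w.length ≤ ncap →
      wordLength ATset ((eval ATset w)⁻¹ * ψ w) ≤ Φ)
    (g : Lamplighter)
    (hgl : (rho L ψ hbij (g * Lamplighter.t⁻¹)).length + Fintype.card σ ≤ ncap)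
    (hgl2 : (rho L ψ hbij g).length + Fintype.card σ ≤ ncap)
    (hr : 2 * (4 * Φ + 2 * Fintype.card σ + 3) + 2 ≤ r) :
    Th r (uhat L ψ hbij g) * thL r Lt' = Th r (uhat L ψ hbij (g * Lamplighter.t⁻¹)) := by
  have h2' : (rho L ψ hbij (g * Lamplighter.t⁻¹ * Lamplighter.t)).length + Fintype.card σ
      ≤ ncap := by
    rw [inv_mul_cancel_right]
    exact hgl2
  have h := step_forward L ψ hbij Lamplighter.t wl_t_le M hM Φ ncap r hdist
    (g * Lamplighter.t⁻¹) hgl h2' hr Lt rfl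
  rw [inv_mul_cancel_right] at h
  have h3 : Th r (uhat L ψ hbij (g * Lamplighter.t⁻¹)) = Th r (uhat L ψ hbij g) *
      (thL r Lt)⁻¹ := eq_mul_inv_of_mul_eq h
  rw [h3, thL_Lt, thL_Lt', shiftP_inv]

/-- length control on the chosen representatives -/
lemma rho_len_le {σa σt : Type} [Fintype σa] [Fintype σt]
    (Ma : DFA (Option (Alph ATset) × Option (Alph ATset)) σa)
    (hMa : Ma.accepts = {w | ∃ p ∈ Rel L ψ Lamplighter.a, w = conv p.1 p.2})
    (Mt : DFA (Option (Alph ATset) × Option (Alph ATset)) σt)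
    (hMt : Mt.accepts = {w | ∃ p ∈ Rel L ψ Lamplighter.t, w = conv p.1 p.2})
    (g : Lamplighter) :
    (rho L ψ hbij g).length ≤ (rho L ψ hbij 1).length +
      (max (Fintype.card σa) (Fintype.card σt)) * wordLength ATset g := by
  obtain ⟨w, hw, hl⟩ := ll_realize g
  rw [← hl, ← hw]
  clear hw hl
  set Q : ℕ := max (Fintype.card σa) (Fintype.card σt) with hQ
  induction w using List.reverseRecOn with
  | nil =>
      rw [eval_nil]
      simp
  | append_singleton w x ih =>
      rw [eval_append, eval_singleton, List.length_append, List.length_cons, List.length_nil,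
        Nat.mul_add, Nat.mul_one]
      have hQa : Fintype.card σa ≤ Q := le_max_left _ _
      have hQt : Fintype.card σt ≤ Q := le_max_right _ _
      rcases letter_cases x with h | h | h <;> subst h
      · rw [La_val]
        have hpair := pair_rel L ψ hbij Lamplighter.a (eval ATset w)
        have hle := len_le_right L ψ hbij.2.1 Ma Lamplighter.a hMa hpair
        omega
      · rw [Lt_val]
        have hpair := pair_rel L ψ hbij Lamplighter.t (eval ATset w)
        have hle := len_le_right L ψ hbij.2.1 Mt Lamplighter.t hMt hpair
        omega
      · rw [Lt'_val]
        have hpair := pair_rel L ψ hbij Lamplighter.t (eval ATset w * Lamplighter.t⁻¹)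
        rw [inv_mul_cancel_right] at hpair
        have hle := len_le_left L ψ hbij.2.1 Mt Lamplighter.t hMt hpair
        omega

end Final

end

end CAG

open CAG in
theorem lamplighter_not_mem_classB_of_prec_ident' (f : FFun) (hf : f.Prec identF) :
    ¬ InB ({Lamplighter.a, Lamplighter.t} : Set Lamplighter) f := by
  classical
  intro hInB
  obtain ⟨L, ψ, hrep, K, M, N, hK, hM0, hN0, hQN, hbound⟩ := hInB
  obtain ⟨hregL, hbij, hrel⟩ := hrep
  obtain ⟨σa, finA, Ma, hMa⟩ := hrel Lamplighter.a (Set.mem_insert _ _)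
  obtain ⟨σt, finT, Mt, hMt⟩ := hrel Lamplighter.t (Set.mem_insert_of_mem _ rfl)
  haveI : Fintype σa := finA
  haveI : Fintype σt := finT
  set q : ℕ := max (Fintype.card σa) (Fintype.card σt) with hq
  set c0 : ℕ := (rho L ψ hbij 1).length with hc0
  -- sublinearity
  have hnpre : ¬ FFun.Preceq identF f := fun hpre => hf.2 ⟨hf.1, hpre⟩
  set klin : ℕ := N + c0 + 9 * q + 9 with hklin
  set M' : ℕ := M * klin with hM'
  set K' : ℕ := 16 * (K + 1) with hK'
  set N' : ℕ := N + c0 + 8 * q + 100 + f.Q with hN'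
  have hex : ∃ n : ℕ, N' ≤ n ∧ (K' : ℝ) * f.toFun (M' * n) < n := by
    by_contra hcon
    push_neg at hcon
    apply hnpre
    refine ⟨K', M', N', by omega, by positivity, by omega, ?_, by omega, fun n hn => ?_⟩
    · show 1 ≤ N'
      omega
    · have h1 := hcon n hn
      show (n : ℝ) ≤ (K' : ℝ) * f.toFun (M' * n)
      exact h1
  obtain ⟨m, hmN', hmlt⟩ := hex
  have hm1 : 1 ≤ m := by omega
  set r : ℕ := m - 1 with hr
  have hrm : r + 1 = m := by omega
  set len : ℕ := 4 * m + 4 with hlen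
  set ncap : ℕ := c0 + q * len + q + 1 with hncap
  set nBig : ℕ := max N ncap with hnBig
  set Φ : ℕ := ⌊(K : ℝ) * f.toFun (M * nBig)⌋₊ with hΦ
  have hQle : f.Q ≤ M * nBig := by
    have h1 : N ≤ nBig := le_max_left _ _
    have h2 : nBig ≤ M * nBig := Nat.le_mul_of_pos_left _ (by omega)
    omega
  have hfnn : (0:ℝ) ≤ f.toFun (M * nBig) := f.nonneg _ hQle
  -- the distortion bound
  have hdist : ∀ w, w ∈ L → w.length ≤ ncap →
      wordLength ATset ((eval ATset w)⁻¹ * ψ w) ≤ Φ := by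
    intro w hw hwl
    have hb := hbound nBig (le_max_left _ _) w hw (le_trans hwl (le_max_right _ _))
    rw [hΦ]
    exact Nat.le_floor hb
  -- nBig ≤ klin * m
  have hnBigle : nBig ≤ klin * m := by
    have e1 : klin * m = N * m + c0 * m + 9 * (q * m) + 9 * m := by rw [hklin]; ring
    have e2 : q * len = 4 * (q * m) + 4 * q := by rw [hlen]; ring
    have p1 : N ≤ N * m := Nat.le_mul_of_pos_right _ (by omega)
    have p2 : c0 ≤ c0 * m := Nat.le_mul_of_pos_right _ (by omega)
    have p3 : q ≤ q * m := Nat.le_mul_of_pos_right _ (by omega)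
    have p4 : 9 ≤ 9 * m := Nat.le_mul_of_pos_right _ (by omega)
    have hmax : nBig = max N ncap := hnBig
    rw [hnBig]
    have : ncap ≤ klin * m := by
      rw [hncap, e1, e2]
      omega
    have hN : N ≤ klin * m := by omega
    omega
  -- the key numerical inequality: 8Φ + 4q + 9 ≤ m
  have hΦm : 8 * Φ + 4 * q + 9 ≤ m := by
    have hKR : (0:ℝ) ≤ (K:ℝ) := Nat.cast_nonneg K
    have h1 : (Φ:ℝ) ≤ (K:ℝ) * f.toFun (M * nBig) :=
      Nat.floor_le (mul_nonneg hKR hfnn)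
    have hargle : M * nBig ≤ M' * m := by
      rw [hM']
      calc M * nBig ≤ M * (klin * m) := Nat.mul_le_mul_left _ hnBigle
        _ = M * klin * m := by ring
    have hmono : f.toFun (M * nBig) ≤ f.toFun (M' * m) := f.mono _ _ hQle hargle
    have hf2 : (0:ℝ) ≤ f.toFun (M' * m) := f.nonneg _ (le_trans hQle hargle)
    have h4 : (Φ:ℝ) ≤ (K:ℝ) * f.toFun (M' * m) :=
      le_trans h1 (mul_le_mul_of_nonneg_left hmono hKR)
    have h5 : (16:ℝ) * ((K:ℝ) + 1) * f.toFun (M' * m) < m := by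
      have : ((K' : ℕ) : ℝ) = 16 * ((K:ℝ) + 1) := by rw [hK']; push_cast; ring
      rw [← this]
      exact hmlt
    have h6 : (16:ℝ) * (K:ℝ) * f.toFun (M' * m) ≤
        (16:ℝ) * ((K:ℝ) + 1) * f.toFun (M' * m) := by nlinarith [hf2]
    have h7 : (16:ℝ) * (Φ:ℝ) < m := by nlinarith [h4, h5, h6, hf2, hKR]
    have h8 : 16 * Φ < m := by exact_mod_cast h7
    have h9 : 8 * q + 100 ≤ m := by omega
    omega
  -- length control for chain elements
  have hrho_len : ∀ g : Lamplighter, wordLength ATset g ≤ len →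
      (rho L ψ hbij g).length + q ≤ ncap := by
    intro g hg
    have h1 := rho_len_le L ψ hbij Ma hMa Mt hMt g
    have hmul : q * wordLength ATset g ≤ q * len := Nat.mul_le_mul_left _ hg
    rw [← hq, ← hc0] at h1
    omega
  set cw : Wd := cword m with hcw
  have hcwlen : cw.length = len := by rw [hcw, cword_length, hlen]
  have hg_wl : ∀ j, wordLength ATset (eval ATset (cw.take j)) ≤ len := by
    intro j
    refine le_trans (ll_wl_eval_le _) ?_
    have h1 := List.length_take (i := j) (l := cw)
    omega
  -- the step inequality for automata
  have hra : 2 * (4 * Φ + 2 * Fintype.card σa + 3) + 2 ≤ r := by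
    have : Fintype.card σa ≤ q := le_max_left _ _
    omega
  have hrt : 2 * (4 * Φ + 2 * Fintype.card σt + 3) + 2 ≤ r := by
    have : Fintype.card σt ≤ q := le_max_right _ _
    omega
  have hcard_a : Fintype.card σa ≤ q := le_max_left _ _
  have hcard_t : Fintype.card σt ≤ q := le_max_right _ _
  -- telescoping
  have htel : ∀ j, j ≤ cw.length → Th r (uhat L ψ hbij 1) * Th r (cw.take j)
      = Th r (uhat L ψ hbij (eval ATset (cw.take j))) := by
    intro j
    induction j with
    | zero =>
        intro _
        rw [List.take_zero, Th_nil, mul_one, eval_nil]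
    | succ j ih =>
        intro hj
        have hj' : j ≤ cw.length := by omega
        have ihh := ih hj'
        have hjlt : j < cw.length := by omega
        have hget : cw[j]? = some cw[j] := List.getElem?_eq_getElem hjlt
        set x : Alph ATset := cw[j] with hxdef
        have htake : cw.take (j+1) = cw.take j ++ [x] := by
          rw [List.take_succ, hget]
          rfl
        have hgj1 : eval ATset (cw.take (j+1)) = eval ATset (cw.take j) * x.1 := by
          rw [htake, eval_append, eval_singleton]
        have hwl_j : wordLength ATset (eval ATset (cw.take j)) ≤ len := hg_wl j
        have hwl_j1 : wordLength ATset (eval ATset (cw.take (j+1))) ≤ len := hg_wl (j+1)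
        have hLHS : Th r (uhat L ψ hbij 1) * Th r (cw.take (j+1)) =
            Th r (uhat L ψ hbij (eval ATset (cw.take j))) * thL r x := by
          rw [htake, Th_append, Th_singleton, ← mul_assoc, ihh]
        rcases letter_cases x with hx | hx | hx
        · -- letter a
          have hx1 : x.1 = Lamplighter.a := by rw [hx]; rfl
          have hgla : (rho L ψ hbij (eval ATset (cw.take j))).length + Fintype.card σa
              ≤ ncap := by
            have := hrho_len _ hwl_j
            omega
          have hgla2 : (rho L ψ hbij (eval ATset (cw.take j) * Lamplighter.a)).length +
              Fintype.card σa ≤ ncap := by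
            have h2 := hrho_len _ hwl_j1
            rw [hgj1, hx1] at h2
            omega
          have hstep := step_forward L ψ hbij Lamplighter.a wl_a_le Ma hMa Φ ncap r hdist
            (eval ATset (cw.take j)) hgla hgla2 hra x hx1
          rw [hLHS, hstep, hgj1, hx1]
        · -- letter t
          have hx1 : x.1 = Lamplighter.t := by rw [hx]; rfl
          have hgla : (rho L ψ hbij (eval ATset (cw.take j))).length + Fintype.card σt
              ≤ ncap := by
            have := hrho_len _ hwl_j
            omega
          have hgla2 : (rho L ψ hbij (eval ATset (cw.take j) * Lamplighter.t)).length +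
              Fintype.card σt ≤ ncap := by
            have h2 := hrho_len _ hwl_j1
            rw [hgj1, hx1] at h2
            omega
          have hstep := step_forward L ψ hbij Lamplighter.t wl_t_le Mt hMt Φ ncap r hdist
            (eval ATset (cw.take j)) hgla hgla2 hrt x hx1
          rw [hLHS, hstep, hgj1, hx1]
        · -- letter t⁻¹
          have hx1 : x.1 = Lamplighter.t⁻¹ := by rw [hx]; rfl
          have hgla : (rho L ψ hbij (eval ATset (cw.take j) * Lamplighter.t⁻¹)).length +
              Fintype.card σt ≤ ncap := by
            have h2 := hrho_len _ hwl_j1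
            rw [hgj1, hx1] at h2
            omega
          have hgla2 : (rho L ψ hbij (eval ATset (cw.take j))).length + Fintype.card σt
              ≤ ncap := by
            have := hrho_len _ hwl_j
            omega
          have hstep := step_tinv L ψ hbij Mt hMt Φ ncap r hdist
            (eval ATset (cw.take j)) hgla hgla2 hrt
          rw [hLHS, hgj1, hx1, ← hstep, hx]

  have hfull := htel cw.length le_rfl
  rw [List.take_length] at hfull
  have hev1 : eval ATset cw = 1 := by rw [hcw]; exact eval_cword m
  rw [hev1] at hfull
  have hTh1 : Th r cw = 1 := by
    have h1 : Th r (uhat L ψ hbij 1) * Th r cw = Th r (uhat L ψ hbij 1) * 1 := by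
      rw [mul_one, hfull]
    exact mul_left_cancel h1
  have hne := Th_cword_ne_one r
  rw [hrm, ← hcw] at hne
  exact hne hTh1





open CAG in
/-- For every `f ∈ 𝔉` with `f ≺ 𝔦` (where `𝔦(n) = n`), the lamplighter group `ℤ₂ ≀ ℤ` does
not belong to the class `ℬ_f`. -/
theorem lamplighter_not_mem_classB_of_prec_ident (f : FFun) (hf : f.Prec identF) :
    ¬ InB ({Lamplighter.a, Lamplighter.t} : Set Lamplighter) f :=
  lamplighter_not_mem_classB_of_prec_ident' f hf
end

section
/- For every positive integer n, the finitely presented groups G_{n+1} = ⟨a, t | a², [tⁱ a t⁻ⁱ, tʲ a t⁻ʲ] for −(n+1) ≤ i < j ≤ n+1⟩ and G_n = ⟨a, t | a², [tⁱ a t⁻ⁱ, tʲ a t⁻ʲ] for −n ≤ i < j ≤ n⟩ are not isomorphic. -/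
namespace CAG

/-- `tⁱ a t⁻ⁱ` in the free group on two generators, with `a` the generator `0` and `t` the
generator `1`. -/
def shiftedLamp (i : ℤ) : FreeGroup (Fin 2) :=
  FreeGroup.of 1 ^ i * FreeGroup.of 0 * FreeGroup.of 1 ^ (-i)

/-- The relators of the group
`G_n = ⟨a, t | a², [tⁱ a t⁻ⁱ, tʲ a t⁻ʲ] for −n ≤ i < j ≤ n⟩`,
where `[x,y] = x⁻¹y⁻¹xy`. -/
def lamplighterApproxRels (n : ℕ) : Set (FreeGroup (Fin 2)) :=
  {FreeGroup.of 0 * FreeGroup.of 0} ∪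
    {w | ∃ i j : ℤ, -(n : ℤ) ≤ i ∧ i < j ∧ j ≤ (n : ℤ) ∧
      w = (shiftedLamp i)⁻¹ * (shiftedLamp j)⁻¹ * shiftedLamp i * shiftedLamp j}

/-- The group `G_n = ⟨a, t | a², [tⁱ a t⁻ⁱ, tʲ a t⁻ʲ] for −n ≤ i < j ≤ n⟩`. -/
abbrev lamplighterApprox (n : ℕ) := PresentedGroup (lamplighterApproxRels n)

/-! ### Auxiliary material for the non-isomorphism proof

We distinguish `G_{n+1}` from `G_n` by counting homomorphisms into the finite group
`Perm (ZMod (4n+3))`.  Since the relators of `G_n` form a subset of those of `G_{n+1}`,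
there is a canonical surjection `proj : G_n →* G_{n+1}`, which induces an injection of
finite hom-sets `(G_{n+1} →* H) ↪ (G_n →* H)`.  This injection is not surjective: the
homomorphism `G_n →* Perm (ZMod (4n+3))` sending `a` to the transposition
`swap 0 (2n+1)` and `t` to the cycle `(+1)` satisfies the relators of `G_n` (swaps at
distance `1, …, 2n` are disjoint) but not those of `G_{n+1}` (swaps at distance `2n+1`
overlap in one point).  An isomorphism `G_{n+1} ≃* G_n` would make both hom-sets have
the same cardinality, a contradiction. -/

/-- The image of a relator in a presented group is trivial. -/
lemma mk_rel_eq_one {α : Type*} (rels : Set (FreeGroup α)) {r : FreeGroup α} (hr : r ∈ rels) :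
    PresentedGroup.mk rels r = 1 :=
  (QuotientGroup.eq_one_iff r).2 (Subgroup.subset_normalClosure hr)

lemma lift_of_eq_mk {α : Type*} (rels : Set (FreeGroup α)) :
    FreeGroup.lift (fun x => (PresentedGroup.of x : PresentedGroup rels)) =
      PresentedGroup.mk rels := by
  ext x
  rfl

lemma rels_mono {n : ℕ} : lamplighterApproxRels n ⊆ lamplighterApproxRels (n + 1) := by
  rintro r (h | ⟨i, j, h1, h2, h3, h4⟩)
  · exact Or.inl h
  · exact Or.inr ⟨i, j, by push_cast; omega, h2, by push_cast; omega, h4⟩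

/-- The canonical projection `G_n →* G_{n+1}` (the relators of `G_{n+1}` contain those of
`G_n`). -/
def proj (n : ℕ) : lamplighterApprox n →* lamplighterApprox (n + 1) :=
  PresentedGroup.toGroup (f := fun x => PresentedGroup.of x) (by
    intro r hr
    rw [lift_of_eq_mk]
    exact mk_rel_eq_one _ (rels_mono hr))

lemma proj_mk (n : ℕ) (w : FreeGroup (Fin 2)) :
    proj n (PresentedGroup.mk _ w) = PresentedGroup.mk _ w := by
  have h : (proj n).comp (PresentedGroup.mk (lamplighterApproxRels n)) =
      PresentedGroup.mk (lamplighterApproxRels (n + 1)) := by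
    ext x
    simp [proj, PresentedGroup.toGroup]
    rfl
  exact DFunLike.congr_fun h w

lemma proj_surjective (n : ℕ) : Function.Surjective (proj n) := by
  intro x
  obtain ⟨w, rfl⟩ := PresentedGroup.mk_surjective _ x
  exact ⟨PresentedGroup.mk _ w, proj_mk n w⟩

lemma hom_inj {α G : Type*} [Group G] {rels : Set (FreeGroup α)} :
    Function.Injective (fun (f : PresentedGroup rels →* G) (x : α) => f (.of x)) := by
  intro f g h
  ext x
  exact congrFun h x

instance homFinite {α G : Type*} [Finite α] [Finite G] [Group G] (rels : Set (FreeGroup α)) :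
    Finite (PresentedGroup rels →* G) :=
  Finite.of_injective _ hom_inj

lemma zmod_intCast_ne {m : ℕ} {p q : ℤ} (h1 : 0 < q - p) (h2 : q - p < m) :
    (p : ZMod m) ≠ (q : ZMod m) := by
  intro h
  have h3 : ((q - p : ℤ) : ZMod m) = 0 := by push_cast; rw [h]; ring
  have hd := (ZMod.intCast_zmod_eq_zero_iff_dvd _ _).1 h3
  have := Int.le_of_dvd h1 hd
  omega

/-- Disjoint transpositions commute. -/
lemma swap_comm' {β : Type*} [DecidableEq β] {a b c d : β}
    (h1 : a ≠ c) (h2 : a ≠ d) (h3 : b ≠ c) (h4 : b ≠ d) :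
    (Equiv.swap a b) * (Equiv.swap c d) = (Equiv.swap c d) * (Equiv.swap a b) := by
  ext x
  simp only [Equiv.Perm.mul_apply, Equiv.swap_apply_def]
  split_ifs <;> simp_all

variable (n : ℕ)

/-- The images of the generators in `Perm (ZMod (4n+3))`: `a ↦ swap 0 (2n+1)`,
`t ↦ (+1)`. -/
def fmap : Fin 2 → Equiv.Perm (ZMod (4 * n + 3)) :=
  ![Equiv.swap ((0 : ℤ) : ZMod (4 * n + 3)) (((2 * n + 1 : ℤ)) : ZMod (4 * n + 3)),
    Equiv.addRight 1]

lemma lift_shiftedLamp (i : ℤ) :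
    FreeGroup.lift (fmap n) (shiftedLamp i) =
      Equiv.swap ((i : ℤ) : ZMod (4 * n + 3)) (((i + (2 * n + 1) : ℤ)) : ZMod (4 * n + 3)) := by
  have hy : (Equiv.addRight (1 : ZMod (4 * n + 3))) ^ i
      = Equiv.addRight (i : ZMod (4 * n + 3)) := by
    rw [Equiv.zsmul_addRight]; congr 1; simp
  simp only [shiftedLamp, map_mul, map_zpow, FreeGroup.lift_apply_of, fmap,
    Matrix.cons_val_one, Matrix.head_cons, Matrix.cons_val_zero]
  rw [zpow_neg, hy, ← Equiv.swap_apply_apply]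
  congr 1 <;> (simp [Equiv.addRight]; try push_cast; try ring)

/-- The homomorphism `G_n →* Perm (ZMod (4n+3))` sending `a` to `swap 0 (2n+1)` and `t` to
`(+1)`.  The relators of `G_n` are satisfied because transpositions at translation distance
`1, …, 2n` are disjoint modulo `4n+3`. -/
def f0 : lamplighterApprox n →* Equiv.Perm (ZMod (4 * n + 3)) :=
  PresentedGroup.toGroup (f := fmap n) (by
    rintro r (h | ⟨i, j, h1, h2, h3, h4⟩)
    · rw [Set.mem_singleton_iff] at h
      subst h
      simp only [map_mul, FreeGroup.lift_apply_of, fmap, Matrix.cons_val_zero]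
      exact Equiv.swap_mul_self _ _
    · subst h4
      simp only [map_mul, map_inv, lift_shiftedLamp]
      have hc : (Equiv.swap ((i : ℤ) : ZMod (4 * n + 3))
            (((i + (2 * n + 1) : ℤ)) : ZMod (4 * n + 3))) *
          (Equiv.swap ((j : ℤ) : ZMod (4 * n + 3))
            (((j + (2 * n + 1) : ℤ)) : ZMod (4 * n + 3))) =
          (Equiv.swap ((j : ℤ) : ZMod (4 * n + 3))
            (((j + (2 * n + 1) : ℤ)) : ZMod (4 * n + 3))) *
          (Equiv.swap ((i : ℤ) : ZMod (4 * n + 3))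
            (((i + (2 * n + 1) : ℤ)) : ZMod (4 * n + 3))) := by
        apply swap_comm'
        · exact zmod_intCast_ne (by omega) (by push_cast; omega)
        · exact zmod_intCast_ne (by omega) (by push_cast; omega)
        · exact (zmod_intCast_ne (p := j) (q := i + (2 * n + 1))
            (by omega) (by push_cast; omega)).symm
        · exact zmod_intCast_ne (by omega) (by push_cast; omega)
      rw [mul_assoc, mul_assoc, hc, inv_mul_cancel_left, inv_mul_cancel])

lemma f0_mk (w : FreeGroup (Fin 2)) :
    f0 n (PresentedGroup.mk _ w) = FreeGroup.lift (fmap n) w := rfl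

/-- The witness word: the commutator `[t^{-n} a t^{n}, t^{n+1} a t^{-(n+1)}]`, a relator of
`G_{n+1}` but one which `f0` does not kill. -/
def witness : FreeGroup (Fin 2) :=
  (shiftedLamp (-(n : ℤ)))⁻¹ * (shiftedLamp ((n : ℤ) + 1))⁻¹ *
    shiftedLamp (-(n : ℤ)) * shiftedLamp ((n : ℤ) + 1)

lemma witness_mem : witness n ∈ lamplighterApproxRels (n + 1) :=
  Or.inr ⟨-(n : ℤ), (n : ℤ) + 1, by push_cast; omega, by omega, by push_cast; omega, rfl⟩

/-- `f0` does not kill the witness word: the transpositions `swap (-n) (n+1)` and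
`swap (n+1) (3n+2)` overlap in exactly one point, hence do not commute. -/
lemma f0_witness_ne_one : f0 n (PresentedGroup.mk _ (witness n)) ≠ 1 := by
  rw [f0_mk, witness]
  simp only [map_mul, map_inv, lift_shiftedLamp]
  set a : ZMod (4 * n + 3) := ((-(n : ℤ) : ℤ) : ZMod (4 * n + 3)) with ha
  set b : ZMod (4 * n + 3) := (((-(n : ℤ) + (2 * n + 1) : ℤ)) : ZMod (4 * n + 3)) with hb
  set b' : ZMod (4 * n + 3) := (((n : ℤ) + 1 : ℤ) : ZMod (4 * n + 3)) with hb'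
  set d : ZMod (4 * n + 3) := ((((n : ℤ) + 1 + (2 * n + 1) : ℤ)) : ZMod (4 * n + 3)) with hd
  have hbb' : b = b' := by rw [hb, hb']; congr 1; ring
  have hab : a ≠ b := by rw [ha, hb]; exact zmod_intCast_ne (by omega) (by push_cast; omega)
  have hbd : b ≠ d := by rw [hb, hd]; exact zmod_intCast_ne (by omega) (by push_cast; omega)
  have had : a ≠ d := by rw [ha, hd]; exact zmod_intCast_ne (by omega) (by push_cast; omega)
  rw [← hbb']
  intro h
  have h2 := DFunLike.congr_fun h b
  simp only [Equiv.Perm.mul_apply, Equiv.Perm.one_apply, Equiv.swap_inv] at h2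
  rw [Equiv.swap_apply_left, Equiv.swap_apply_of_ne_of_ne had.symm hbd.symm,
    Equiv.swap_apply_right, Equiv.swap_apply_right] at h2
  exact hab h2

end CAG

set_option maxHeartbeats 1000000 in
open CAG in
/-- For every positive integer `n`, the groups
`G_{n+1} = ⟨a, t | a², [tⁱ a t⁻ⁱ, tʲ a t⁻ʲ] for −(n+1) ≤ i < j ≤ n+1⟩` and
`G_n = ⟨a, t | a², [tⁱ a t⁻ⁱ, tʲ a t⁻ʲ] for −n ≤ i < j ≤ n⟩` are not isomorphic. -/
theorem lamplighterApprox_not_isomorphic (n : ℕ) (hn : 0 < n) :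
    ¬ Nonempty (lamplighterApprox (n + 1) ≃* lamplighterApprox n) := by
  rintro ⟨e⟩
  haveI : NeZero (4 * n + 3) := ⟨by omega⟩
  set P := Equiv.Perm (ZMod (4 * n + 3)) with hP
  -- the restriction map along the canonical surjection `G_n →* G_{n+1}`
  let r : (lamplighterApprox (n + 1) →* P) → (lamplighterApprox n →* P) :=
    fun g => g.comp (proj n)
  have hrinj : Function.Injective r := by
    intro g1 g2 h
    refine PresentedGroup.ext fun x => ?_
    have h1 := DFunLike.congr_fun h (PresentedGroup.of x)
    simpa [r, proj, PresentedGroup.toGroup.of] using h1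
  -- precomposition with the isomorphism is a bijection of hom-sets
  let E : (lamplighterApprox n →* P) ≃ (lamplighterApprox (n + 1) →* P) :=
    { toFun := fun f => f.comp e.toMonoidHom
      invFun := fun g => g.comp e.symm.toMonoidHom
      left_inv := fun f => by ext x; simp
      right_inv := fun g => by ext x; simp }
  have hcard : Nat.card (lamplighterApprox (n + 1) →* P)
      = Nat.card (lamplighterApprox n →* P) := Nat.card_congr E.symm
  have hsurj : Function.Surjective r :=
    ((Nat.bijective_iff_injective_and_card r).2 ⟨hrinj, hcard⟩).2
  obtain ⟨g, hg⟩ := hsurj (f0 n)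
  apply f0_witness_ne_one n
  rw [← hg]
  show g (proj n (PresentedGroup.mk _ (witness n))) = 1
  rw [proj_mk, mk_rel_eq_one _ (witness_mem n), map_one]
end

section
/- Every finite subgroup of an HNN extension is conjugate to a finite subgroup of its base group: if G* is the HNN extension of a group G relative to an isomorphism φ : A → B between subgroups A, B ≤ G, then for every finite subgroup H of G* there exists an element x ∈ G* such that x H x⁻¹ is contained in (the canonical image of) G. -/
open HNNExtension HNNExtension.NormalWord Subgroup Multiplicative

namespace HNNConj

variable {G : Type*} [Group G] {A B : Subgroup G} {φ : A ≃* B}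

/-- Britton length of an element of an HNN extension: the number of `t`-letters in a
reduced word representing it. -/
noncomputable def len (φ : A ≃* B) (x : HNNExtension G A B φ) : ℕ :=
  ((NormalWord.equiv φ (Classical.arbitrary (NormalWord.TransversalPair G A B))) x).toList.length

theorem len_prod (w : ReducedWord G A B) : len φ (w.prod φ) = w.toList.length := by
  classical
  set d := Classical.arbitrary (NormalWord.TransversalPair G A B)
  obtain ⟨w', h1, h2, -⟩ := ReducedWord.exists_normalWord_prod_eq φ d w
  have hw' : (NormalWord.equiv φ d) (w.prod φ) = w' := by
    apply (NormalWord.equiv φ d).symm.injective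
    simp only [Equiv.symm_apply_apply]
    exact h1.symm
  have := congrArg List.length h2
  unfold len
  rw [hw']
  simpa [List.length_map] using this

theorem exists_word (x : HNNExtension G A B φ) :
    ∃ w : ReducedWord G A B, w.prod φ = x ∧ w.toList.length = len φ x := by
  classical
  set d := Classical.arbitrary (NormalWord.TransversalPair G A B)
  exact ⟨((NormalWord.equiv φ d) x).toReducedWord,
    (NormalWord.equiv φ d).symm_apply_apply x, rfl⟩

theorem len_of (g : G) : len φ (of g) = 0 := by
  have : ((ReducedWord.empty G A B : ReducedWord G A B)) = _ := rfl
  have h : ((⟨g, [], List.isChain_nil⟩ : ReducedWord G A B)).prod φ = of g := by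
    simp [ReducedWord.prod]
  simpa [h] using len_prod (φ := φ) (⟨g, [], List.isChain_nil⟩ : ReducedWord G A B)

theorem len_one : len φ (1 : HNNExtension G A B φ) = 0 := by
  simpa using len_of (φ := φ) (1 : G)

theorem exists_of_len_eq_zero {x : HNNExtension G A B φ} (h : len φ x = 0) :
    ∃ g : G, x = of g := by
  obtain ⟨w, hw, hlen⟩ := exists_word x
  rw [h, List.length_eq_zero_iff] at hlen
  refine ⟨w.head, ?_⟩
  rw [← hw]
  simp [ReducedWord.prod, hlen]

theorem len_of_mul (g : G) (x : HNNExtension G A B φ) :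
    len φ (of g * x) = len φ x := by
  obtain ⟨w, hw, hlen⟩ := exists_word x
  have h : ((⟨g * w.head, w.toList, w.chain⟩ : ReducedWord G A B)).prod φ = of g * x := by
    rw [← hw]
    simp [ReducedWord.prod, mul_assoc]
  have := len_prod (φ := φ) (⟨g * w.head, w.toList, w.chain⟩ : ReducedWord G A B)
  rw [h] at this
  rw [this, hlen]

theorem prod_congr {w w' : ReducedWord G A B} (h1 : w.head = w'.head)
    (h2 : w.toList = w'.toList) : w.prod φ = w'.prod φ := by
  rcases w with ⟨h, l, c⟩; rcases w' with ⟨h', l', c'⟩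
  simp only at h1 h2
  subst h1; subst h2; rfl

theorem prod_of_toList_cons {w w' : ReducedWord G A B} {u : ℤˣ}
    (h : w.toList = (u, w'.head) :: w'.toList) :
    w.prod φ = of w.head * t ^ (u : ℤ) * w'.prod φ := by
  simp [ReducedWord.prod, h, mul_assoc]

/-- Concatenation of reduced words with a non-pinching junction. -/
theorem concat_word_aux :
    ∀ (L : List (ℤˣ × G)) (hd : G) (ch : L.Chain' (fun a b => a.2 ∈ toSubgroup A B a.1 → a.1 = b.1))
      (b : ReducedWord G A B)
      (hj : ∀ p ∈ L.getLast?, ∀ q ∈ b.toList.head?,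
        p.2 * b.head ∈ toSubgroup A B p.1 → p.1 = q.1),
      ∃ c : ReducedWord G A B,
        c.prod φ = (⟨hd, L, ch⟩ : ReducedWord G A B).prod φ * b.prod φ ∧
        c.toList.map Prod.fst = L.map Prod.fst ++ b.toList.map Prod.fst ∧
        (L ≠ [] → c.head = hd) ∧ (L = [] → c.head = hd * b.head) := by
  intro L
  induction L with
  | nil =>
    intro hd ch b hj
    refine ⟨⟨hd * b.head, b.toList, b.chain⟩, ?_, by simp, by simp, fun _ => rfl⟩
    simp [ReducedWord.prod, mul_assoc]
  | cons p L ih =>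
    intro hd ch b hj
    obtain ⟨u₁, g₁⟩ := p
    have ch' : L.Chain' (fun a b => a.2 ∈ toSubgroup A B a.1 → a.1 = b.1) := ch.tail
    have hj' : ∀ p ∈ L.getLast?, ∀ q ∈ b.toList.head?,
        p.2 * b.head ∈ toSubgroup A B p.1 → p.1 = q.1 := by
      intro p hp q hq hmem
      refine hj p ?_ q hq hmem
      rcases L with - | ⟨r, L'⟩
      · simp at hp
      · rw [List.getLast?_cons_cons]; exact hp
    obtain ⟨c', hc'prod, hc'map, hc'head, hc'head0⟩ := ih g₁ ch' b hj'
    have hchain : ((u₁, c'.head) :: c'.toList).Chain'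
        (fun a b => a.2 ∈ toSubgroup A B a.1 → a.1 = b.1) := by
      refine List.isChain_cons.2 ⟨?_, c'.chain⟩
      intro q hq hmem
      have hq1 : (L.map Prod.fst ++ b.toList.map Prod.fst).head? = some q.1 := by
        rw [← hc'map, List.head?_map]
        rw [Option.mem_def] at hq
        rw [hq, Option.map_some]
      rcases hL : L with - | ⟨⟨u₂, g₂⟩, L'⟩
      · subst hL
        have hch : c'.head = g₁ * b.head := hc'head0 rfl
        rcases hb : b.toList with - | ⟨q', bL⟩
        · rw [hb] at hq1; simp at hq1
        · rw [hb] at hq1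
          simp only [List.map_nil, List.nil_append, List.map_cons, List.head?_cons,
            Option.some_inj] at hq1
          rw [hch] at hmem
          have h2 := hj (u₁, g₁) (by simp) q' (by rw [hb]; simp) hmem
          exact h2.trans hq1
      · subst hL
        have hch : c'.head = g₁ := hc'head (by simp)
        simp only [List.map_cons, List.cons_append, List.head?_cons, Option.some_inj] at hq1
        rw [hch] at hmem
        have h1 : u₁ = u₂ := (List.isChain_cons_cons.1 ch).1 hmem
        exact h1.trans hq1
    refine ⟨⟨hd, (u₁, c'.head) :: c'.toList, hchain⟩, ?_, ?_, fun _ => rfl, by simp⟩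
    · have h1 : ((⟨hd, (u₁, c'.head) :: c'.toList, hchain⟩ : ReducedWord G A B)).prod φ
          = of hd * t ^ (u₁ : ℤ) * c'.prod φ :=
        prod_of_toList_cons rfl
      have h2 : ((⟨hd, (u₁, g₁) :: L, ch⟩ : ReducedWord G A B)).prod φ
          = of hd * t ^ (u₁ : ℤ) * (⟨g₁, L, ch'⟩ : ReducedWord G A B).prod φ :=
        prod_of_toList_cons rfl
      rw [h1, h2, hc'prod]; simp [mul_assoc]
    · simp [hc'map]

theorem concat_word (a b : ReducedWord G A B)
    (hj : ∀ p ∈ a.toList.getLast?, ∀ q ∈ b.toList.head?,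
      p.2 * b.head ∈ toSubgroup A B p.1 → p.1 = q.1) :
    len φ (a.prod φ * b.prod φ) = a.toList.length + b.toList.length := by
  obtain ⟨c, hc1, hc2, -, -⟩ := concat_word_aux (φ := φ) a.toList a.head a.chain b hj
  have ha : (⟨a.head, a.toList, a.chain⟩ : ReducedWord G A B) = a := rfl
  rw [ha] at hc1
  have := len_prod (φ := φ) c
  rw [hc1] at this
  rw [this, ← List.length_map (f := Prod.fst), hc2]
  simp

theorem len_mul_of (x : HNNExtension G A B φ) (g : G) :
    len φ (x * of g) = len φ x := by
  obtain ⟨w, hw, hlen⟩ := exists_word x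
  have hb : ((⟨g, [], List.isChain_nil⟩ : ReducedWord G A B)).prod φ = of g := by
    simp [ReducedWord.prod]
  have := concat_word (φ := φ) w (⟨g, [], List.isChain_nil⟩ : ReducedWord G A B)
    (by intro p hp q hq; simp at hq)
  rw [hw, hb] at this
  simp at this
  rw [this, hlen]

/-- Reversal: a reduced word for the inverse. -/
theorem rev_word (w : ReducedWord G A B) :
    ∃ v : ReducedWord G A B, v.prod φ = (w.prod φ)⁻¹ ∧
      v.toList.length = w.toList.length ∧
      v.toList.getLast? = w.toList.head?.map (fun p => (-p.1, w.head⁻¹)) := by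
  obtain ⟨hd, L, ch⟩ := w
  dsimp only
  induction L generalizing hd with
  | nil =>
    refine ⟨⟨hd⁻¹, [], List.isChain_nil⟩, ?_, by simp, by simp⟩
    simp [ReducedWord.prod]
  | cons p L ih =>
    obtain ⟨u, g⟩ := p
    obtain ⟨v', hv'prod, hv'len, hv'last⟩ := ih g ch.tail
    have hchain : (v'.toList ++ [(-u, hd⁻¹)]).Chain'
        (fun a b => a.2 ∈ toSubgroup A B a.1 → a.1 = b.1) := by
      rw [List.Chain', List.isChain_append]
      refine ⟨v'.chain, List.isChain_singleton _, ?_⟩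
      intro p hp q hq
      simp only [List.head?_cons, Option.mem_def, Option.some_inj] at hq
      subst hq
      rw [hv'last] at hp
      rcases hL : L with - | ⟨⟨u₂, g₂⟩, L'⟩
      · rw [hL] at hp; simp at hp
      · rw [hL] at hp
        simp only [List.head?_cons, Option.map_some, Option.mem_def, Option.some_inj] at hp
        subst hp
        intro hmem
        simp only [neg_neg]
        rw [inv_mem_iff (x := g)] at hmem
        by_cases huu : u = u₂
        · rw [huu]
        · exfalso
          have hu2 : u = -u₂ := Int.units_ne_iff_eq_neg.1 huu
          rw [← hu2] at hmem
          have ch2 : ((u, g) :: (u₂, g₂) :: L').Chain'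
              (fun a b => a.2 ∈ toSubgroup A B a.1 → a.1 = b.1) := by
            rw [← hL]; exact ch
          exact huu ((List.isChain_cons_cons.1 ch2).1 hmem)
    refine ⟨⟨v'.head, v'.toList ++ [(-u, hd⁻¹)], hchain⟩, ?_, by simp [hv'len], by simp⟩
    have hsplit : ((⟨v'.head, v'.toList ++ [(-u, hd⁻¹)], hchain⟩ : ReducedWord G A B)).prod φ
        = v'.prod φ * (t ^ ((-u : ℤˣ) : ℤ) * of hd⁻¹) := by
      simp [ReducedWord.prod, mul_assoc]
    rw [hsplit, hv'prod]
    have hcons : ((⟨hd, (u, g) :: L, ch⟩ : ReducedWord G A B)).prod φ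
        = of hd * t ^ (u : ℤ) * (⟨g, L, ch.tail⟩ : ReducedWord G A B).prod φ :=
      prod_of_toList_cons rfl
    rw [hcons]
    simp [mul_assoc, zpow_neg]
    done

theorem len_inv (x : HNNExtension G A B φ) : len φ x⁻¹ = len φ x := by
  suffices h : ∀ y : HNNExtension G A B φ, len φ y⁻¹ ≤ len φ y by
    refine le_antisymm (h x) ?_
    have := h x⁻¹
    rwa [inv_inv] at this
  intro y
  obtain ⟨w, hw, hlen⟩ := exists_word y
  obtain ⟨v, hv, hvlen, -⟩ := rev_word (φ := φ) w
  rw [hw] at hv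
  have h1 : len φ y⁻¹ = v.toList.length := by rw [← hv, len_prod]
  exact le_of_eq (by rw [h1, hvlen, hlen])

/-- Prefix of a reduced word. -/
def pref (w : ReducedWord G A B) (k : ℕ) : ReducedWord G A B :=
  ⟨w.head, w.toList.take k, w.chain.prefix (List.take_prefix k w.toList)⟩

theorem pref_head (w : ReducedWord G A B) (k : ℕ) : (pref w k).head = w.head := rfl

theorem pref_toList (w : ReducedWord G A B) (k : ℕ) : (pref w k).toList = w.toList.take k := rfl

theorem pref_split (w : ReducedWord G A B) (k : ℕ) :
    ∃ s : ReducedWord G A B, s.head = 1 ∧ s.toList = w.toList.drop k ∧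
      w.prod φ = (pref w k).prod φ * s.prod φ := by
  refine ⟨⟨1, w.toList.drop k, w.chain.suffix (List.drop_suffix k w.toList)⟩, rfl, rfl, ?_⟩
  simp only [ReducedWord.prod, pref]
  rw [← List.take_append_drop k w.toList]
  simp [mul_assoc]

theorem len_pref (w : ReducedWord G A B) (k : ℕ) (hk : k ≤ w.toList.length) :
    len φ ((pref w k).prod φ) = k := by
  rw [len_prod, pref_toList, List.length_take]
  omega

theorem len_pref_inv_mul (w : ReducedWord G A B) (k : ℕ) :
    len φ (((pref w k).prod φ)⁻¹ * w.prod φ) = w.toList.length - k := by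
  obtain ⟨s, -, hs2, hs3⟩ := pref_split (φ := φ) w k
  have : ((pref w k).prod φ)⁻¹ * w.prod φ = s.prod φ := by
    rw [hs3]; group
  rw [this, len_prod, hs2, List.length_drop]

theorem pref_of_toList_cons {w w' : ReducedWord G A B} {u : ℤˣ}
    (h : w.toList = (u, w'.head) :: w'.toList) (k : ℕ) :
    (pref w (k+1)).prod φ = of w.head * t ^ (u : ℤ) * (pref w' k).prod φ := by
  have : (pref w (k+1)).toList = (u, (pref w' k).head) :: (pref w' k).toList := by
    rw [pref_toList, h]
    simp [pref_toList, pref_head]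
  exact prod_of_toList_cons this

/-- Conjugating a suitable subgroup element by the stable letter lands in the base group. -/
theorem exists_conj (u : ℤˣ) (g : G) (hg : g ∈ toSubgroup A B (-u)) :
    ∃ g' : G, t ^ (-(u : ℤ)) * of g * t ^ (u : ℤ) = (of g' : HNNExtension G A B φ) := by
  rcases Int.units_eq_one_or u with rfl | rfl
  · refine ⟨φ.symm ⟨g, hg⟩, ?_⟩
    have h2 := equiv_symm_eq_conj (φ := φ) ⟨g, hg⟩
    have hc : ((1 : ℤˣ) : ℤ) = 1 := rfl
    rw [hc, zpow_one, zpow_neg_one]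
    exact h2.symm
  · have hg' : g ∈ A := by simpa using hg
    refine ⟨φ ⟨g, hg'⟩, ?_⟩
    have h2 := equiv_eq_conj (φ := φ) ⟨g, hg'⟩
    have hc : ((-1 : ℤˣ) : ℤ) = -1 := rfl
    rw [hc, neg_neg, zpow_one, zpow_neg_one]
    exact h2.symm

theorem len_t_mul_le (u : ℤˣ) (z : HNNExtension G A B φ) :
    len φ (t ^ (u : ℤ) * z) ≤ len φ z + 1 := by
  obtain ⟨c, hc, hclen⟩ := exists_word z
  rcases hL : c.toList with - | ⟨⟨w₁, k₁⟩, cL⟩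
  · -- z is in the base group
    have hz : z = of c.head := by
      rw [← hc]; simp [ReducedWord.prod, hL]
    have hW : ((⟨1, [(u, c.head)], List.isChain_singleton _⟩ : ReducedWord G A B)).prod φ
        = t ^ (u : ℤ) * z := by
      rw [hz]; simp [ReducedWord.prod]
    have := len_prod (φ := φ) (⟨1, [(u, c.head)], List.isChain_singleton _⟩ : ReducedWord G A B)
    rw [hW] at this
    simp only [List.length_cons, List.length_nil] at this
    omega
  · have chL : cL.Chain' (fun a b => a.2 ∈ toSubgroup A B a.1 → a.1 = b.1) := by
      have := c.chain; rw [hL] at this; exact this.tail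
    set c' : ReducedWord G A B := ⟨k₁, cL, chL⟩ with hc'
    have hcons : c.toList = (w₁, c'.head) :: c'.toList := by rw [hL]
    have hz : z = of c.head * t ^ (w₁ : ℤ) * c'.prod φ := by
      rw [← hc]; exact prod_of_toList_cons hcons
    by_cases hp : w₁ = -u ∧ c.head ∈ toSubgroup A B u
    · -- cancellation
      obtain ⟨rfl, hmem⟩ := hp
      have hmem' : c.head ∈ toSubgroup A B (- -u) := by rwa [neg_neg]
      obtain ⟨g', hg'⟩ := exists_conj (φ := φ) (-u) c.head hmem'
      have h1 : t ^ (u : ℤ) * z = of g' * c'.prod φ := by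
        rw [hz, ← hg']
        have : ((-u : ℤˣ) : ℤ) = -(u : ℤ) := by simp
        rw [this]
        group
      rw [h1, len_of_mul, len_prod]
      have h4 : c'.toList.length = cL.length := rfl
      rw [hL] at hclen
      simp only [List.length_cons] at hclen
      omega
    · -- no cancellation
      have hchain : ((u, c.head) :: c.toList).Chain'
          (fun a b => a.2 ∈ toSubgroup A B a.1 → a.1 = b.1) := by
        refine List.isChain_cons.2 ⟨?_, c.chain⟩
        intro q hq hmem
        rw [hL] at hq
        simp only [List.head?_cons, Option.mem_def, Option.some_inj] at hq
        subst hq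
        by_contra hne
        have : w₁ = -u := by
          have h2 : u ≠ w₁ := hne
          have := Int.units_ne_iff_eq_neg.1 h2
          rw [this, neg_neg]
        exact hp ⟨this, hmem⟩
      have hW : ((⟨1, (u, c.head) :: c.toList, hchain⟩ : ReducedWord G A B)).prod φ
          = t ^ (u : ℤ) * z := by
        rw [← hc]
        simp [ReducedWord.prod, mul_assoc]
      have := len_prod (φ := φ) (⟨1, (u, c.head) :: c.toList, hchain⟩ : ReducedWord G A B)
      rw [hW] at this
      simp only [List.length_cons] at this
      omega

theorem len_mul_le (x y : HNNExtension G A B φ) :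
    len φ (x * y) ≤ len φ x + len φ y := by
  suffices h : ∀ n (x y : HNNExtension G A B φ), len φ x = n →
      len φ (x * y) ≤ n + len φ y by exact h _ x y rfl
  intro n
  induction n using Nat.strong_induction_on with
  | _ n ih =>
    intro x y hx
    rcases n with - | m
    · obtain ⟨g, rfl⟩ := exists_of_len_eq_zero hx
      rw [len_of_mul]
      omega
    · obtain ⟨w, hw, hwlen⟩ := exists_word x
      rcases hL : w.toList with - | ⟨⟨u₁, g₁⟩, L⟩
      · rw [hL] at hwlen; rw [hx] at hwlen; simp at hwlen
      · have chL : L.Chain' (fun a b => a.2 ∈ toSubgroup A B a.1 → a.1 = b.1) := by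
          have := w.chain; rw [hL] at this; exact this.tail
        set w' : ReducedWord G A B := ⟨g₁, L, chL⟩ with hw'
        have hcons : w.toList = (u₁, w'.head) :: w'.toList := by rw [hL]
        have hxe : x = of w.head * t ^ (u₁ : ℤ) * w'.prod φ := by
          rw [← hw]; exact prod_of_toList_cons hcons
        have hlw' : len φ (w'.prod φ) = m := by
          rw [len_prod]
          have : w.toList.length = L.length + 1 := by rw [hL]; simp
          rw [hx] at hwlen
          simp only [hw']
          omega
        have h1 : x * y = of w.head * (t ^ (u₁ : ℤ) * (w'.prod φ * y)) := by
          rw [hxe]; group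
        rw [h1, len_of_mul]
        have h2 := len_t_mul_le (φ := φ) u₁ (w'.prod φ * y)
        have h3 := ih m (by omega) (w'.prod φ) y hlw'
        omega

theorem pref_zero_prod (w : ReducedWord G A B) : (pref w 0).prod φ = of w.head := by
  simp [ReducedWord.prod, pref]

/-- Uniqueness of points on geodesics from the basepoint: any `m` at distance `k` from the
base point lying on a geodesic to `w.prod` is in the same coset as the `k`-prefix of `w`. -/
theorem geodesic_unique :
    ∀ (k : ℕ) (w : ReducedWord G A B) (m : HNNExtension G A B φ), len φ m = k →
      len φ m + len φ (m⁻¹ * w.prod φ) = w.toList.length →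
      len φ (((pref w k).prod φ)⁻¹ * m) = 0 := by
  intro k
  induction k with
  | zero =>
    intro w m h1 h2
    rw [pref_zero_prod, ← map_inv, len_of_mul, h1]
  | succ k ih =>
    intro w m h1 h2
    have hkn : k + 1 ≤ w.toList.length := by omega
    rcases hL : w.toList with - | ⟨⟨u₁, g₁⟩, wL⟩
    · rw [hL] at hkn; simp at hkn
    · have chwL : wL.Chain' (fun a b => a.2 ∈ toSubgroup A B a.1 → a.1 = b.1) := by
        have := w.chain; rw [hL] at this; exact this.tail
      set w' : ReducedWord G A B := ⟨g₁, wL, chwL⟩ with hw'def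
      have hcons : w.toList = (u₁, w'.head) :: w'.toList := by rw [hL]
      obtain ⟨c, hc, hclen⟩ := exists_word m
      rcases hcL : c.toList with - | ⟨⟨v₁, h₁⟩, cL⟩
      · rw [hcL, h1] at hclen; simp at hclen
      · have chcL : cL.Chain' (fun a b => a.2 ∈ toSubgroup A B a.1 → a.1 = b.1) := by
          have := c.chain; rw [hcL] at this; exact this.tail
        set c' : ReducedWord G A B := ⟨h₁, cL, chcL⟩ with hc'def
        have hccons : c.toList = (v₁, c'.head) :: c'.toList := by rw [hcL]
        obtain ⟨v, hvprod, hvlen, hvlast⟩ := rev_word (φ := φ) c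
        have hvlast' : v.toList.getLast? = some (-v₁, c.head⁻¹) := by
          rw [hvlast, hcL]; simp
        by_cases hpin : v₁ = u₁ ∧ c.head⁻¹ * w.head ∈ toSubgroup A B (-u₁)
        · obtain ⟨rfl, hmem⟩ := hpin
          have hmem' : w.head⁻¹ * c.head ∈ toSubgroup A B (-v₁) := by
            have := inv_mem hmem
            simpa using this
          obtain ⟨g', hg'⟩ := exists_conj (φ := φ) v₁ (w.head⁻¹ * c.head) hmem'
          rw [map_mul, map_inv] at hg'
          set mb : HNNExtension G A B φ := t ^ (-(v₁ : ℤ)) * ((of w.head)⁻¹ * m) with hmbdef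
          have hm : m = of c.head * t ^ (v₁ : ℤ) * c'.prod φ := by
            rw [← hc]; exact prod_of_toList_cons hccons
          have hmb : mb = of g' * c'.prod φ := by
            rw [hmbdef, hm, ← hg']
            group
          have hmblen : len φ mb = k := by
            rw [hmb, len_of_mul, len_prod]
            rw [hcL] at hclen
            simp only [List.length_cons] at hclen
            simp only [hc'def]
            omega
          have hx : w.prod φ = of w.head * t ^ (v₁ : ℤ) * w'.prod φ :=
            prod_of_toList_cons hcons
          have hmx : mb⁻¹ * w'.prod φ = m⁻¹ * w.prod φ := by
            rw [hmbdef, hx]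
            group
          have hlw : w'.toList.length = w.toList.length - 1 := by
            rw [hL]; simp [hw'def]
          have ih2 : len φ mb + len φ (mb⁻¹ * w'.prod φ) = w'.toList.length := by
            rw [hmx, hmblen]
            omega
          have := ih w' mb hmblen ih2
          have hprefcons := pref_of_toList_cons (φ := φ) hcons k
          rw [hprefcons]
          have heq : (of w.head * t ^ (v₁ : ℤ) * (pref w' k).prod φ)⁻¹ * m
              = ((pref w' k).prod φ)⁻¹ * mb := by
            rw [hmbdef]
            group
          rw [heq]
          exact this
        · -- no pinch: the concatenated word is reduced, contradiction with lengths
          exfalso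
          have hj : ∀ p ∈ v.toList.getLast?, ∀ q ∈ w.toList.head?,
              p.2 * w.head ∈ toSubgroup A B p.1 → p.1 = q.1 := by
            intro p hp q hq hmem
            rw [hvlast'] at hp
            simp only [Option.mem_def, Option.some_inj] at hp
            subst hp
            rw [hL] at hq
            simp only [List.head?_cons, Option.mem_def, Option.some_inj] at hq
            subst hq
            simp only
            by_cases hvu : v₁ = u₁
            · exact absurd ⟨hvu, by rw [hvu] at hmem; exact hmem⟩ hpin
            · have : v₁ = -u₁ := Int.units_ne_iff_eq_neg.1 hvu
              rw [this, neg_neg]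
          have hcw := concat_word (φ := φ) v w hj
          rw [hvprod, hc] at hcw
          have h3 : len φ (m⁻¹ * w.prod φ) = (k+1) + w.toList.length := by
            rw [hcw, hvlen, hclen, h1]
          omega

/-- Existence of branch points: for any `x y` there is `m` on a geodesic from the base point
to each of them with `d(x,y) = d(x,m) + d(m,y)`. -/
theorem branch_point (x y : HNNExtension G A B φ) :
    ∃ m : HNNExtension G A B φ,
      len φ m + len φ (m⁻¹ * x) = len φ x ∧
      len φ m + len φ (m⁻¹ * y) = len φ y ∧
      len φ (x⁻¹ * y) = len φ (m⁻¹ * x) + len φ (m⁻¹ * y) := by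
  suffices h : ∀ n (x y : HNNExtension G A B φ), len φ x = n →
      ∃ m : HNNExtension G A B φ,
      len φ m + len φ (m⁻¹ * x) = len φ x ∧
      len φ m + len φ (m⁻¹ * y) = len φ y ∧
      len φ (x⁻¹ * y) = len φ (m⁻¹ * x) + len φ (m⁻¹ * y) from h _ x y rfl
  intro n
  induction n using Nat.strong_induction_on with
  | _ n ih =>
    intro x y hx
    rcases n with - | n'
    · obtain ⟨g, rfl⟩ := exists_of_len_eq_zero hx
      refine ⟨of g, ?_, ?_, ?_⟩ <;>
        simp [← map_inv, len_of_mul, len_of, len_one, hx]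
    · obtain ⟨v, hv, hvlen⟩ := exists_word x
      rcases hL : v.toList with - | ⟨⟨u₁, g₁⟩, vL⟩
      · rw [hL, hx] at hvlen; simp at hvlen
      · have chvL : vL.Chain' (fun a b => a.2 ∈ toSubgroup A B a.1 → a.1 = b.1) := by
          have := v.chain; rw [hL] at this; exact this.tail
        set v' : ReducedWord G A B := ⟨g₁, vL, chvL⟩ with hv'def
        have hvcons : v.toList = (u₁, v'.head) :: v'.toList := by rw [hL]
        have hxe : x = of v.head * t ^ (u₁ : ℤ) * v'.prod φ := by
          rw [← hv]; exact prod_of_toList_cons hvcons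
        obtain ⟨rv, hrvprod, hrvlen, hrvlast⟩ := rev_word (φ := φ) v
        have hrvlast' : rv.toList.getLast? = some (-u₁, v.head⁻¹) := by
          rw [hrvlast, hL]; simp
        obtain ⟨c, hcp, hclen⟩ := exists_word y
        have hnopinch : (∀ q ∈ c.toList.head?, ¬ (q.1 = u₁ ∧
            v.head⁻¹ * c.head ∈ toSubgroup A B (-u₁))) →
            len φ (x⁻¹ * y) = len φ x + len φ y := by
          intro hnp
          have hj : ∀ p ∈ rv.toList.getLast?, ∀ q ∈ c.toList.head?,
              p.2 * c.head ∈ toSubgroup A B p.1 → p.1 = q.1 := by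
            intro p hp q hq hmem
            rw [hrvlast'] at hp
            simp only [Option.mem_def, Option.some_inj] at hp
            subst hp
            simp only at hmem ⊢
            by_cases hvu : q.1 = u₁
            · exact absurd ⟨hvu, hmem⟩ (hnp q hq)
            · have : q.1 = -u₁ := Int.units_ne_iff_eq_neg.1 hvu
              rw [this]
          have hcw := concat_word (φ := φ) rv c hj
          rw [hrvprod, hv, hcp] at hcw
          rw [hcw, hrvlen, hvlen, hclen]
        rcases hcL : c.toList with - | ⟨⟨w₁, k₁⟩, cL⟩
        · -- y is in the base group: no pinch possible
          have h3 := hnopinch (by rw [hcL]; simp)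
          exact ⟨1, by simp [len_one], by simp [len_one], by simp [h3]⟩
        · by_cases hp : w₁ = u₁ ∧ v.head⁻¹ * c.head ∈ toSubgroup A B (-u₁)
          · obtain ⟨heq, hmem⟩ := hp
            subst heq
            have chcL : cL.Chain' (fun a b => a.2 ∈ toSubgroup A B a.1 → a.1 = b.1) := by
              have := c.chain; rw [hcL] at this; exact this.tail
            set c' : ReducedWord G A B := ⟨k₁, cL, chcL⟩ with hc'def
            have hccons : c.toList = (w₁, c'.head) :: c'.toList := by rw [hcL]
            have hye : y = of c.head * t ^ (w₁ : ℤ) * c'.prod φ := by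
              rw [← hcp]; exact prod_of_toList_cons hccons
            obtain ⟨g', hg'⟩ := exists_conj (φ := φ) w₁ (v.head⁻¹ * c.head) hmem
            rw [map_mul, map_inv] at hg'
            set z : HNNExtension G A B φ := t ^ (-(w₁ : ℤ)) * (of v.head)⁻¹ with hzdef
            have hx₂ : z * x = v'.prod φ := by rw [hzdef, hxe]; group
            have hy₂ : z * y = of g' * c'.prod φ := by rw [hzdef, hye, ← hg']; group
            have hlx₂ : len φ (z * x) = n' := by
              rw [hx₂, len_prod]
              have : v.toList.length = vL.length + 1 := by rw [hL]; simp
              rw [hx] at hvlen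
              simp only [hv'def]
              omega
            obtain ⟨mb, e1, e2, e3⟩ := ih n' (by omega) (z * x) (z * y) hlx₂
            set j := len φ mb with hjdef
            have hMhyp : len φ mb + len φ (mb⁻¹ * v'.prod φ) = v'.toList.length := by
              rw [← hx₂]
              rw [e1, hlx₂]
              have hvl : v.toList.length = vL.length + 1 := by rw [hL]; simp
              rw [hx] at hvlen
              simp only [hv'def]
              omega
            have hjle : j ≤ vL.length := by
              have := hMhyp
              simp only [hv'def] at this
              omega
            have hM := geodesic_unique (φ := φ) j v' mb rfl hMhyp
            obtain ⟨h, hh⟩ := exists_of_len_eq_zero hM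
            have hmb : mb = (pref v' j).prod φ * of h := by
              rw [← hh]; group
            have chW : ((w₁, g₁) :: vL.take j).Chain'
                (fun a b => a.2 ∈ toSubgroup A B a.1 → a.1 = b.1) := by
              have hpre : ((w₁, g₁) :: vL.take j) <+: ((w₁, g₁) :: vL) :=
                ⟨vL.drop j, by simp⟩
              have := v.chain; rw [hL] at this
              exact this.prefix hpre
            have hW : ((⟨1, (w₁, g₁) :: vL.take j, chW⟩ : ReducedWord G A B)).prod φ
                = t ^ (w₁ : ℤ) * (pref v' j).prod φ := by
              simp [ReducedWord.prod, pref, hv'def, mul_assoc]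
            have hlenW := len_prod (φ := φ) (⟨1, (w₁, g₁) :: vL.take j, chW⟩ : ReducedWord G A B)
            rw [hW] at hlenW
            simp only [List.length_cons, List.length_take] at hlenW
            set m : HNNExtension G A B φ := z⁻¹ * mb with hmdef
            have hlm : len φ m = j + 1 := by
              have hzinv : z⁻¹ = of v.head * t ^ (w₁ : ℤ) := by rw [hzdef]; group
              have h1 : m = of v.head * (t ^ (w₁ : ℤ) * (pref v' j).prod φ * of h) := by
                rw [hmdef, hzinv, hmb]; group
              rw [h1, len_of_mul, len_mul_of, hlenW]
              omega
            have hmx : m⁻¹ * x = mb⁻¹ * (z * x) := by rw [hmdef]; group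
            have hmy : m⁻¹ * y = mb⁻¹ * (z * y) := by rw [hmdef]; group
            have hxy : x⁻¹ * y = (z * x)⁻¹ * (z * y) := by group
            have hly : len φ y = cL.length + 1 := by
              rw [← hclen, hcL]; simp
            have hlzy : len φ (z * y) = cL.length := by
              rw [hy₂, len_of_mul, len_prod]
            refine ⟨m, ?_, ?_, ?_⟩
            · rw [hmx, hlm, hx]
              omega
            · rw [hmy, hlm, hly]
              rw [hlzy] at e2
              omega
            · rw [hxy, hmx, hmy]
              exact e3
          · have h3 := hnopinch (by
              intro q hq
              rw [hcL] at hq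
              simp only [List.head?_cons, Option.mem_def, Option.some_inj] at hq
              subst hq
              exact hp)
            exact ⟨1, by simp [len_one], by simp [len_one], by simp [h3]⟩

theorem geodesic_chain (m₁ m₂ Y : HNNExtension G A B φ)
    (h1 : len φ m₁ + len φ (m₁⁻¹ * Y) = len φ Y)
    (h2 : len φ m₂ + len φ (m₂⁻¹ * Y) = len φ Y)
    (hle : len φ m₁ ≤ len φ m₂) :
    len φ m₁ + len φ (m₁⁻¹ * m₂) = len φ m₂ := by
  obtain ⟨w, hw, hwlen⟩ := exists_word Y
  obtain ⟨k, hk⟩ : ∃ k, len φ m₁ = k := ⟨_, rfl⟩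
  obtain ⟨k', hk'⟩ : ∃ k', len φ m₂ = k' := ⟨_, rfl⟩
  rw [hk] at hle h1 ⊢
  rw [hk'] at hle h2 ⊢
  have hM1 := geodesic_unique (φ := φ) k w m₁ hk (by rw [hw, hwlen, hk]; exact h1)
  have hM2 := geodesic_unique (φ := φ) k' w m₂ hk' (by rw [hw, hwlen, hk']; exact h2)
  obtain ⟨h, hh⟩ := exists_of_len_eq_zero hM1
  obtain ⟨h', hh'⟩ := exists_of_len_eq_zero hM2
  have hm1 : m₁ = (pref w k).prod φ * of h := by rw [← hh]; group
  have hm2 : m₂ = (pref w k').prod φ * of h' := by rw [← hh']; group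
  have hQ : m₁⁻¹ * m₂ = (of h)⁻¹ *
      ((((pref w k).prod φ)⁻¹ * (pref w k').prod φ) * of h') := by
    rw [hm1, hm2]; group
  have hpp : (pref w k).prod φ = (pref (pref w k') k).prod φ := by
    refine prod_congr rfl ?_
    rw [pref_toList, pref_toList, pref_toList, List.take_take]
    congr 1
    omega
  have hlen2 : k' ≤ w.toList.length := by rw [hwlen]; omega
  have hQlen : len φ (((pref w k).prod φ)⁻¹ * (pref w k').prod φ) = k' - k := by
    rw [hpp]
    have := len_pref_inv_mul (φ := φ) (pref w k') k
    rw [this, pref_toList, List.length_take]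
    omega
  rw [hQ, ← map_inv, len_of_mul, len_mul_of, hQlen]
  omega

theorem gromov_half (y z w m₁ m₂ : HNNExtension G A B φ)
    (b1 : len φ m₁ + len φ (m₁⁻¹ * y) = len φ y)
    (b2 : len φ m₁ + len φ (m₁⁻¹ * z) = len φ z)
    (b3 : len φ (y⁻¹ * z) = len φ (m₁⁻¹ * y) + len φ (m₁⁻¹ * z))
    (c0 : len φ m₂ + len φ (m₂⁻¹ * y) = len φ y)
    (c1 : len φ m₂ + len φ (m₂⁻¹ * w) = len φ w)
    (hle : len φ m₁ ≤ len φ m₂) :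
    len φ y + len φ (z⁻¹ * w) ≤ len φ w + len φ (y⁻¹ * z) := by
  have hch := geodesic_chain (φ := φ) m₁ m₂ y b1 c0 hle
  have hzw : z⁻¹ * w = (z⁻¹ * m₁) * ((m₁⁻¹ * m₂) * (m₂⁻¹ * w)) := by group
  have t1 : len φ (z⁻¹ * w) ≤ len φ (z⁻¹ * m₁) + (len φ (m₁⁻¹ * m₂) + len φ (m₂⁻¹ * w)) := by
    rw [hzw]
    calc len φ ((z⁻¹ * m₁) * ((m₁⁻¹ * m₂) * (m₂⁻¹ * w)))
        ≤ len φ (z⁻¹ * m₁) + len φ ((m₁⁻¹ * m₂) * (m₂⁻¹ * w)) := len_mul_le _ _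
      _ ≤ len φ (z⁻¹ * m₁) + (len φ (m₁⁻¹ * m₂) + len φ (m₂⁻¹ * w)) := by
          have := len_mul_le (φ := φ) (m₁⁻¹ * m₂) (m₂⁻¹ * w)
          omega
  have t2 : len φ (z⁻¹ * m₁) = len φ (m₁⁻¹ * z) := by
    have hinv : z⁻¹ * m₁ = (m₁⁻¹ * z)⁻¹ := by group
    rw [hinv, len_inv]
  omega

theorem gromov4 (y z w : HNNExtension G A B φ) :
    len φ y + len φ (z⁻¹ * w) ≤
      max (len φ z + len φ (y⁻¹ * w)) (len φ w + len φ (y⁻¹ * z)) := by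
  obtain ⟨m₁, b1, b2, b3⟩ := branch_point (φ := φ) y z
  obtain ⟨m₂, c0, c1, c3⟩ := branch_point (φ := φ) y w
  rcases le_total (len φ m₁) (len φ m₂) with hle | hle
  · exact le_max_of_le_right (gromov_half y z w m₁ m₂ b1 b2 b3 c0 c1 hle)
  · have h := gromov_half y w z m₂ m₁ c0 c1 c3 b1 b2 hle
    have e : len φ (w⁻¹ * z) = len φ (z⁻¹ * w) := by
      have : w⁻¹ * z = (z⁻¹ * w)⁻¹ := by group
      rw [this, len_inv]
    rw [e] at h
    exact le_max_of_le_left h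

theorem four_point (p q r s : HNNExtension G A B φ) :
    len φ (p⁻¹ * q) + len φ (r⁻¹ * s) ≤
      max (len φ (p⁻¹ * r) + len φ (q⁻¹ * s)) (len φ (p⁻¹ * s) + len φ (q⁻¹ * r)) := by
  have h := gromov4 (φ := φ) (p⁻¹ * q) (p⁻¹ * r) (p⁻¹ * s)
  have e1 : (p⁻¹ * r)⁻¹ * (p⁻¹ * s) = r⁻¹ * s := by group
  have e2 : (p⁻¹ * q)⁻¹ * (p⁻¹ * s) = q⁻¹ * s := by group
  have e3 : (p⁻¹ * q)⁻¹ * (p⁻¹ * r) = q⁻¹ * r := by group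
  rw [e1, e2, e3] at h
  exact h

/-- The homomorphism to `ℤ` counting the total exponent of the stable letter. -/
def sgn : HNNExtension G A B φ →* Multiplicative ℤ :=
  lift 1 (ofAdd (1 : ℤ)) (by intro a; simp)

theorem sgn_of (g : G) : sgn (φ := φ) (of g) = 1 := by
  simp [sgn]

theorem sgn_t : sgn (φ := φ) t = ofAdd (1 : ℤ) := by
  simp [sgn]

theorem toAdd_sgn_eq_zero {x : HNNExtension G A B φ} (h : len φ x = 0) :
    toAdd (sgn x) = 0 := by
  obtain ⟨g, rfl⟩ := exists_of_len_eq_zero h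
  rw [sgn_of]
  simp

theorem odd_toAdd_sgn {x : HNNExtension G A B φ} (h : len φ x = 1) :
    Odd (toAdd (sgn x)) := by
  obtain ⟨w, hw, hwlen⟩ := exists_word x
  rw [h] at hwlen
  obtain ⟨⟨u, g⟩, hL⟩ := List.length_eq_one_iff.1 hwlen
  have hx : x = of w.head * (t ^ (u : ℤ) * of g) := by
    rw [← hw]
    simp [ReducedWord.prod, hL]
  have hs : sgn (φ := φ) x = (ofAdd (1 : ℤ)) ^ (u : ℤ) := by
    rw [hx, map_mul, map_mul, sgn_of, map_zpow, sgn_t, one_mul, sgn_of, mul_one]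
  rw [hs]
  rcases Int.units_eq_one_or u with rfl | rfl
  · refine ⟨0, ?_⟩
    norm_num
  · refine ⟨-1, ?_⟩
    norm_num

end HNNConj

open HNNConj HNNExtension Multiplicative in
/-- Every finite subgroup of an HNN extension is conjugate to a subgroup of (the canonical
image of) its base group: if `H` is a finite subgroup of the HNN extension of `G` relative to
an isomorphism `φ : A ≃* B` between subgroups `A, B ≤ G`, then there is an `x` in the HNN
extension with `x H x⁻¹` contained in the image of `G`. -/
theorem finite_subgroup_of_HNNExtension_conjugate_into_base
    (G : Type*) [Group G] (A B : Subgroup G) (φ : A ≃* B)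
    (H : Subgroup (HNNExtension G A B φ))
    (hH : (H : Set (HNNExtension G A B φ)).Finite) :
    ∃ x : HNNExtension G A B φ, ∀ h ∈ H,
      x * h * x⁻¹ ∈ (HNNExtension.of : G →* HNNExtension G A B φ).range := by
  classical
  set F := hH.toFinset with hF
  have h1F : (1 : HNNExtension G A B φ) ∈ F := hH.mem_toFinset.2 H.one_mem
  set img := (F ×ˢ F).image (fun p => len φ (p.1⁻¹ * p.2)) with himgdef
  have himg : img.Nonempty :=
    ⟨len φ ((1 : HNNExtension G A B φ)⁻¹ * 1),
      Finset.mem_image.2 ⟨(1, 1), Finset.mem_product.2 ⟨h1F, h1F⟩, rfl⟩⟩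
  set D := img.max' himg with hD
  obtain ⟨p, hpmem, hpD⟩ := Finset.mem_image.1 (img.max'_mem himg)
  obtain ⟨ha, hb⟩ : p.1 ∈ H ∧ p.2 ∈ H := by
    have := Finset.mem_product.1 hpmem
    exact ⟨hH.mem_toFinset.1 this.1, hH.mem_toFinset.1 this.2⟩
  set a := p.1
  set b := p.2
  have hbound : ∀ g₁ ∈ H, ∀ g₂ ∈ H, len φ (g₁⁻¹ * g₂) ≤ D := by
    intro g₁ h₁ g₂ h₂
    exact Finset.le_max' img (len φ (g₁⁻¹ * g₂)) (Finset.mem_image.2 ⟨(g₁, g₂),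
      Finset.mem_product.2 ⟨hH.mem_toFinset.2 h₁, hH.mem_toFinset.2 h₂⟩, rfl⟩)
  set r := (D + 1) / 2 with hr
  have hrD : r ≤ D ∧ D ≤ 2 * r ∧ 2 * r ≤ D + 1 := by omega
  obtain ⟨w, hw, hwlen⟩ := exists_word (φ := φ) (a⁻¹ * b)
  have hwD : w.toList.length = D := by rw [hwlen, hpD]
  set m₀ := a * (pref w r).prod φ with hm₀
  have hm₀a : len φ (a⁻¹ * m₀) = r := by
    have : a⁻¹ * m₀ = (pref w r).prod φ := by rw [hm₀]; group
    rw [this, len_pref]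
    rw [hwD]; exact hrD.1
  have hm₀b : len φ (m₀⁻¹ * b) = D - r := by
    have : m₀⁻¹ * b = ((pref w r).prod φ)⁻¹ * w.prod φ := by rw [hm₀, hw]; group
    rw [this, len_pref_inv_mul, hwD]
  have hab : len φ (a⁻¹ * b) = D := hpD
  have linv : ∀ x y : HNNExtension G A B φ, len φ (x⁻¹ * y) = len φ (y⁻¹ * x) := by
    intro x y
    have : x⁻¹ * y = (y⁻¹ * x)⁻¹ := by group
    rw [this, len_inv]
  have hcen : ∀ h ∈ H, len φ (m₀⁻¹ * h) ≤ r := by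
    intro h hh
    have h4 := four_point (φ := φ) h m₀ a b
    have e1 : len φ (h⁻¹ * a) ≤ D := hbound h hh a ha
    have e2 : len φ (h⁻¹ * b) ≤ D := hbound h hh b hb
    have e3 : len φ (m₀⁻¹ * a) = r := by rw [linv]; exact hm₀a
    have hmax : max (len φ (h⁻¹ * a) + len φ (m₀⁻¹ * b))
        (len φ (h⁻¹ * b) + len φ (m₀⁻¹ * a)) ≤ D + r := by
      apply max_le <;> omega
    rw [hab] at h4
    rw [linv]
    omega
  have hkey : ∀ h ∈ H, len φ (m₀⁻¹ * h * m₀) ≤ 1 := by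
    intro h hh
    have h4 := four_point (φ := φ) a b m₀ (h * m₀)
    have e1 : len φ (a⁻¹ * m₀) = r := hm₀a
    have e2 : len φ (b⁻¹ * (h * m₀)) ≤ r := by
      have : b⁻¹ * (h * m₀) = (m₀⁻¹ * (h⁻¹ * b))⁻¹ := by group
      rw [this, len_inv]
      exact hcen _ (H.mul_mem (H.inv_mem hh) hb)
    have e3 : len φ (a⁻¹ * (h * m₀)) ≤ r := by
      have : a⁻¹ * (h * m₀) = (m₀⁻¹ * (h⁻¹ * a))⁻¹ := by group
      rw [this, len_inv]
      exact hcen _ (H.mul_mem (H.inv_mem hh) ha)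
    have e4 : len φ (b⁻¹ * m₀) ≤ r := by
      rw [linv]; exact hcen b hb
    have e5 : len φ (m₀⁻¹ * (h * m₀)) = len φ (m₀⁻¹ * h * m₀) := by
      rw [mul_assoc]
    rw [hab, e5] at h4
    have hmax : max (len φ (a⁻¹ * m₀) + len φ (b⁻¹ * (h * m₀)))
        (len φ (a⁻¹ * (h * m₀)) + len φ (b⁻¹ * m₀)) ≤ 2 * r := by
      apply max_le <;> omega
    omega
  refine ⟨m₀⁻¹, ?_⟩
  intro h hh
  have hzero : len φ (m₀⁻¹ * h * m₀) = 0 := by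
    by_contra hne
    have hone : len φ (m₀⁻¹ * h * m₀) = 1 := by
      have := hkey h hh
      omega
    have hodd := odd_toAdd_sgn (φ := φ) hone
    set q := m₀⁻¹ * h * m₀ with hq
    have hq2 : q * q = m₀⁻¹ * (h * h) * m₀ := by rw [hq]; group
    have hq2le : len φ (q * q) ≤ 1 := by rw [hq2]; exact hkey _ (H.mul_mem hh hh)
    have hsum : toAdd (sgn (φ := φ) (q * q)) = toAdd (sgn (φ := φ) q) + toAdd (sgn (φ := φ) q) := by
      rw [map_mul]
      rfl
    rcases Nat.le_one_iff_eq_zero_or_eq_one.1 hq2le with h0 | h1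
    · have := toAdd_sgn_eq_zero (φ := φ) h0
      rw [hsum] at this
      obtain ⟨c, hc⟩ := hodd
      omega
    · have := odd_toAdd_sgn (φ := φ) h1
      rw [hsum] at this
      obtain ⟨c, hc⟩ := hodd
      obtain ⟨c', hc'⟩ := this
      omega
  obtain ⟨g, hg⟩ := exists_of_len_eq_zero hzero
  refine ⟨g, ?_⟩
  rw [inv_inv, ← hg]
end
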